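/- arXiv:math/0403150 — 8 statements merged into one kernel-verified Lean document; each statement's English description precedes it below -/
import Mathlib

section
/- For every integer M ≥ 2 there exists a function f : (0,1) × ℕ → (0,1), (ε, d) ↦ ε', with the following two properties. (i) For every fixed ε ∈ (0,1), f(ε, d) converges to ε^{(M−1)/M} as d → ∞. (ii) For every ε ∈ (0,1), every positive integer d and every nonnegative integer c with c ≤ (1 − ε)·d^M / M!, one has c_{<d>} ≤ (1 − f(ε, d))·d^{M−1} / (M−1)!. -/
open Filter Finset
open scoped Classical

/-- `IsDDecomp d c r f` says that `f r < f (r+1) < ⋯ < f d` (with `f r ≥ r`, `1 ≤ r ≤ d`)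
is a `d`-decomposition of `c`, i.e. `c = ∑_{i=r}^{d} C(f i, i)`. -/
def IsDDecomp (d c r : ℕ) (f : ℕ → ℕ) : Prop :=
  1 ≤ r ∧ r ≤ d ∧ r ≤ f r ∧ (∀ i, r ≤ i → i < d → f i < f (i + 1)) ∧
    c = ∑ i ∈ Finset.Icc r d, Nat.choose (f i) i

/-- The lowering operation `c ↦ c_{<d>}`: given the `d`-decomposition
`c = ∑_{i=r}^{d} C(c_i, i)`, set `c_{<d>} = ∑_{i=r}^{d} C(c_i - 1, i)`;
by convention it is `0` when no `d`-decomposition exists (e.g. for `c = 0`). -/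
noncomputable def lowerD (d c : ℕ) : ℕ :=
  if h : ∃ p : ℕ × (ℕ → ℕ), IsDDecomp d c p.1 p.2 then
    ∑ i ∈ Finset.Icc h.choose.1 d, Nat.choose (h.choose.2 i - 1) i
  else 0

open Topology
set_option maxHeartbeats 1000000

lemma myPowDescA (t : ℕ) : ∀ k : ℕ, t ^ k ≤ (t + k).descFactorial k := by
  intro k
  induction k with
  | zero => simp
  | succ k ih =>
    rw [Nat.descFactorial_succ, pow_succ]
    have h1 : t + (k+1) - k = t + 1 := by omega
    rw [show t + (k+1) = (t + k) + 1 from by omega]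
    rw [show t + k + 1 - k = t + 1 from by omega]
    have h2 : (t + k).descFactorial k ≤ (t + k + 1).descFactorial k :=
      Nat.descFactorial_le k (by omega)
    calc t ^ k * t ≤ (t + k + 1).descFactorial k * (t+1) :=
          Nat.mul_le_mul (le_trans ih h2) (by omega)
      _ = (t+1) * (t + k + 1).descFactorial k := by ring

lemma myPowDescB (t k : ℕ) : t ^ (k+1) ≤ (t + k).descFactorial (k+1) := by
  rw [Nat.descFactorial_succ, pow_succ, show t + k - k = t from by omega]
  calc t ^ k * t ≤ (t + k).descFactorial k * t := Nat.mul_le_mul_right _ (myPowDescA t k)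
    _ = t * (t+k).descFactorial k := by ring

lemma myHockeyEq (k t d : ℕ) (h : t ≤ d) :
    (∑ i ∈ Finset.Icc t d, (i + k).choose k) + (t + k).choose (k+1)
      = (d + k + 1).choose (k+1) := by
  induction d, h using Nat.le_induction with
  | base =>
    rw [Finset.Icc_self, Finset.sum_singleton]
    rw [show t + k + 1 = (t+k) + 1 from rfl, Nat.choose_succ_succ (t+k) k]
  | succ d hd ih =>
    rw [Finset.sum_Icc_succ_top (by omega)]
    have hp : (d + k + 1 + 1).choose (k+1) = (d+k+1).choose k + (d+k+1).choose (k+1) :=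
      Nat.choose_succ_succ (d+k+1) k
    rw [show d + 1 + k + 1 = d + k + 1 + 1 from by omega, show d + 1 + k = d + k + 1 from by omega]
    omega

lemma mySumChooseLe (k r b : ℕ) (ψ : ℕ → ℕ) (hψ : ∀ i, r ≤ i → i ≤ b → ψ i ≤ i + k) :
    ∑ i ∈ Finset.Icc r b, (ψ i).choose i ≤ (b + k + 1).choose (k+1) := by
  rcases le_or_gt r b with h | h
  · have step1 : ∑ i ∈ Finset.Icc r b, (ψ i).choose i
        ≤ ∑ i ∈ Finset.Icc r b, (i + k).choose k := by
      apply Finset.sum_le_sum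
      intro i hi
      rw [Finset.mem_Icc] at hi
      calc (ψ i).choose i ≤ (i + k).choose i := Nat.choose_le_choose i (hψ i hi.1 hi.2)
        _ = (i+k).choose k := by
            rw [← Nat.choose_symm (Nat.le_add_right i k), Nat.add_sub_cancel_left]
    have := myHockeyEq k r b h
    omega
  · rw [Finset.Icc_eq_empty_of_lt h, Finset.sum_empty]
    exact Nat.zero_le _

lemma myPhiAdd (φ : ℕ → ℕ) (r d : ℕ) (hinc : ∀ i, r ≤ i → i < d → φ i < φ (i+1)) :
    ∀ n i, r ≤ i → i + n ≤ d → φ i + n ≤ φ (i + n) := by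
  intro n
  induction n with
  | zero => simp
  | succ n ih =>
    intro i hri hid
    have h1 : φ i + n ≤ φ (i + n) := ih i hri (by omega)
    have h2 : φ (i+n) < φ (i+n+1) := hinc (i+n) (by omega) (by omega)
    rw [show i + (n+1) = i + n + 1 from by omega]
    omega

lemma myL1 (m r : ℕ) (φ : ℕ → ℕ) (hr : 1 ≤ r) (hφr : r ≤ φ r) :
    ∀ b, r ≤ b → (∀ i, r ≤ i → i < b → φ i < φ (i+1)) → φ b ≤ b + (m+1) →
      b * (∑ i ∈ Finset.Icc r b, ((φ i - 1).choose i))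
        ≤ (m+2) * ∑ i ∈ Finset.Icc r b, (φ i).choose i := by
  intro b hb
  induction b, hb using Nat.le_induction with
  | base =>
    intro _ hub
    rw [Finset.Icc_self, Finset.sum_singleton, Finset.sum_singleton]
    have hn : 1 ≤ φ r := le_trans hr hφr
    have key := Nat.choose_mul_succ_eq (φ r - 1) r
    rw [Nat.sub_add_cancel hn] at key
    -- key : (φ r - 1).choose r * φ r = (φ r).choose r * (φ r - r)
    apply Nat.le_of_mul_le_mul_right _ (show 0 < φ r from hn)
    calc r * ((φ r - 1).choose r) * φ r = r * ((φ r - 1).choose r * φ r) := by ring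
      _ = r * ((φ r).choose r * (φ r - r)) := by rw [key]
      _ = (φ r).choose r * (r * (φ r - r)) := by ring
      _ ≤ (φ r).choose r * ((m+2) * φ r) := by
          apply Nat.mul_le_mul_left
          calc r * (φ r - r) ≤ φ r * (m+1) := Nat.mul_le_mul hφr (by omega)
            _ ≤ (m+2) * φ r := by rw [mul_comm]; exact Nat.mul_le_mul_right _ (by omega)
      _ = (m+2) * (φ r).choose r * φ r := by ring
  | succ b hb ih =>
    intro hinc hub
    have hmono := myPhiAdd φ r (b+1) hinc
    have hφb1 : b + 1 ≤ φ (b+1) := by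
      have := hmono (b+1-r) r le_rfl (by omega)
      rw [show r + (b+1-r) = b+1 from by omega] at this
      omega
    have hinc' : ∀ i, r ≤ i → i < b → φ i < φ (i+1) := fun i h1 h2 => hinc i h1 (by omega)
    have hφb : φ b ≤ b + (m+1) := by
      have := hinc b hb (by omega)
      omega
    have ih' := ih hinc' hφb
    rw [Finset.sum_Icc_succ_top (by omega : r ≤ b + 1),
        Finset.sum_Icc_succ_top (by omega : r ≤ b + 1)]
    set S0 := ∑ i ∈ Finset.Icc r b, ((φ i - 1).choose i) with hS0
    set S1 := ∑ i ∈ Finset.Icc r b, (φ i).choose i with hS1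
    obtain ⟨K, hφval, hKle⟩ : ∃ K, φ (b+1) = b + 1 + K ∧ K ≤ m + 1 :=
      ⟨φ (b+1) - (b+1), by omega, by omega⟩
    have hub' : ∀ i, r ≤ i → i ≤ b → φ i ≤ i + K := by
      intro i h1 h2
      have := hmono (b+1-i) i h1 (by omega)
      rw [show i + (b+1-i) = b+1 from by omega] at this
      omega
    have h2 : S0 + (b+1) * ((φ (b+1) - 1).choose (b+1)) ≤ (m+2) * ((φ (b+1)).choose (b+1)) := by
      rcases Nat.eq_zero_or_pos K with hK0 | hKpos
      · -- K = 0 : all terms vanish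
        have hS0z : S0 = 0 := by
          apply Finset.sum_eq_zero
          intro i hi
          rw [Finset.mem_Icc] at hi
          have hle := hub' i hi.1 hi.2
          have hge : i ≤ φ i := by
            have := hmono (i-r) r le_rfl (by omega)
            rw [show r + (i-r) = i from by omega] at this
            omega
          have : φ i = i := by omega
          rw [this]
          exact Nat.choose_eq_zero_of_lt (by omega)
        have hC0z : (φ (b+1) - 1).choose (b+1) = 0 := by
          apply Nat.choose_eq_zero_of_lt; omega
        rw [hS0z, hC0z]
        simp
      · obtain ⟨K', rfl⟩ : ∃ K', K = K' + 1 := ⟨K - 1, by omega⟩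
        have hC0 : (φ (b+1) - 1).choose (b+1) = (b + K' + 1).choose K' := by
          rw [show φ (b+1) - 1 = b + K' + 1 from by omega]
          rw [← Nat.choose_symm (show b+1 ≤ b + K' + 1 from by omega)]
          congr 1
          omega
        have hC1 : (φ (b+1)).choose (b+1) = (b + K' + 1 + 1).choose (K'+1) := by
          rw [show φ (b+1) = b + K' + 1 + 1 from by omega]
          rw [← Nat.choose_symm (show b+1 ≤ b + K' + 1 + 1 from by omega)]
          congr 1
          omega
        set B := b + K' + 1 with hB
        have hS0le : S0 ≤ B.choose (K'+1) := by
          have := mySumChooseLe K' r b (fun i => φ i - 1)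
            (fun i h1 h2 => by have := hub' i h1 h2; show φ i - 1 ≤ i + K'; omega)
          rw [hS0]
          exact le_trans this (by rw [show b + K' + 1 = B from rfl])
        have hid : B.choose (K'+1) * (K'+1) = B.choose K' * (b+1) := by
          have := Nat.choose_succ_right_eq B K'
          rw [show B - K' = b + 1 from by omega] at this
          exact this
        have hpascal : (B+1).choose (K'+1) = B.choose K' + B.choose (K'+1) :=
          Nat.choose_succ_succ B K'
        rw [hC0, hC1]
        -- goal : S0 + (b+1) * B.choose K' ≤ (m+2) * (B+1).choose (K'+1)
        calc S0 + (b+1) * (B.choose K')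
            = S0 + B.choose K' * (b+1) := by ring
          _ = S0 + B.choose (K'+1) * (K'+1) := by rw [hid]
          _ ≤ B.choose (K'+1) + B.choose (K'+1) * (m+1) := by
              have : B.choose (K'+1) * (K'+1) ≤ B.choose (K'+1) * (m+1) :=
                Nat.mul_le_mul_left _ (by omega)
              omega
          _ = (m+2) * B.choose (K'+1) := by ring
          _ ≤ (m+2) * ((B+1).choose (K'+1)) := by
              apply Nat.mul_le_mul_left
              omega
    calc (b+1) * (S0 + (φ (b+1) - 1).choose (b+1))
        = b * S0 + (S0 + (b+1) * ((φ (b+1) - 1).choose (b+1))) := by ring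
      _ ≤ (m+2) * S1 + (m+2) * ((φ (b+1)).choose (b+1)) := Nat.add_le_add ih' h2
      _ = (m+2) * (S1 + (φ (b+1)).choose (b+1)) := by ring

lemma myHub (m : ℕ) (ε : ℝ) (hε0 : 0 < ε) (d : ℕ) (hd : 1 ≤ d) (c r : ℕ) (φ : ℕ → ℕ)
    (hdec : IsDDecomp d c r φ)
    (hc : (c:ℝ) ≤ (1 - ε) * (d:ℝ)^(m+2) / ((m+2).factorial : ℝ)) :
    φ d ≤ d + (m+1) := by
  obtain ⟨hr1, hrd, hφr, hinc, hceq⟩ := hdec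
  by_contra hcon
  push_neg at hcon
  have h1 : (φ d).choose d ≤ c := by
    rw [hceq]
    exact Finset.single_le_sum (f := fun i => (φ i).choose i) (fun i _ => Nat.zero_le _)
      (Finset.mem_Icc.mpr ⟨hrd, le_rfl⟩)
  have h2 : (d + (m+2)).choose d ≤ (φ d).choose d := Nat.choose_le_choose d (by omega)
  have h3 : (d:ℕ)^(m+2) ≤ (m+2).factorial * ((d + (m+2)).choose (m+2)) := by
    have := myPowDescA d (m+2)
    rwa [Nat.descFactorial_eq_factorial_mul_choose] at this
  have h4 : (d + (m+2)).choose (m+2) = (d + (m+2)).choose d := by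
    have := Nat.choose_symm (Nat.le_add_right d (m+2))
    rwa [Nat.add_sub_cancel_left] at this
  rw [h4] at h3
  have hFpos : (0:ℝ) < ((m+2).factorial : ℝ) := by
    exact_mod_cast (m+2).factorial_pos
  have hd0 : (0:ℝ) < (d:ℝ) := by exact_mod_cast hd
  have hcF : (c:ℝ) * ((m+2).factorial : ℝ) ≤ (1 - ε) * (d:ℝ)^(m+2) :=
    (le_div_iff₀ hFpos).mp hc
  have hchain : ((d:ℝ))^(m+2) ≤ ((m+2).factorial : ℝ) * (((d + (m+2)).choose d : ℕ) : ℝ) := by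
    exact_mod_cast h3
  have hcc : (((d + (m+2)).choose d : ℕ) : ℝ) ≤ (c:ℝ) := by
    exact_mod_cast le_trans h2 h1
  have hmul := mul_le_mul_of_nonneg_left hcc hFpos.le
  have hexp : (1-ε) * (d:ℝ)^(m+2) = (d:ℝ)^(m+2) - ε * (d:ℝ)^(m+2) := by ring
  have hppos : (0:ℝ) < (d:ℝ)^(m+2) := pow_pos hd0 _
  nlinarith [mul_pos hε0 hppos]

lemma myKeyA (m : ℕ) (ε : ℝ) (hε0 : 0 < ε) (hε1 : ε < 1) (d : ℕ) (hd : 1 ≤ d) (c : ℕ)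
    (hc : (c:ℝ) ≤ (1 - ε) * (d:ℝ)^(m+2) / ((m+2).factorial : ℝ)) :
    ((m+1).factorial : ℝ) * (lowerD d c : ℝ) ≤ (1 - ε) * (d:ℝ)^(m+1) := by
  have hd0 : (0:ℝ) < (d:ℝ) := by exact_mod_cast hd
  have hFpos : (0:ℝ) < ((m+2).factorial : ℝ) := by exact_mod_cast (m+2).factorial_pos
  by_cases h : ∃ p : ℕ × (ℕ → ℕ), IsDDecomp d c p.1 p.2
  · have hspec := h.choose_spec
    set r := h.choose.1 with hrdef
    set φ := h.choose.2 with hφdef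
    have hval : lowerD d c = ∑ i ∈ Finset.Icc r d, ((φ i - 1).choose i) := by
      unfold lowerD; rw [dif_pos h]
    have hub : φ d ≤ d + (m+1) := myHub m ε hε0 d hd c r φ h.choose_spec hc
    obtain ⟨hr1, hrd, hφr, hinc, hceq⟩ := hspec
    have hL1 := myL1 m r φ hr1 hφr d hrd hinc hub
    rw [← hceq] at hL1
    have hcast : (d:ℝ) * ((∑ i ∈ Finset.Icc r d, ((φ i - 1).choose i) : ℕ) : ℝ)
        ≤ ((m:ℝ)+2) * (c:ℝ) := by exact_mod_cast hL1
    have hcF : (c:ℝ) * ((m+2).factorial : ℝ) ≤ (1 - ε) * (d:ℝ)^(m+2) :=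
      (le_div_iff₀ hFpos).mp hc
    rw [hval]
    apply le_of_mul_le_mul_left _ hd0
    have hfac : ((m+2).factorial : ℝ) = ((m:ℝ)+2) * ((m+1).factorial : ℝ) := by
      have : (m+2).factorial = (m+2) * (m+1).factorial := Nat.factorial_succ (m+1)
      push_cast [this]; ring
    have hF1 : (0:ℝ) ≤ ((m+1).factorial : ℝ) := by positivity
    calc (d:ℝ) * (((m+1).factorial : ℝ) * ((∑ i ∈ Finset.Icc r d, ((φ i - 1).choose i) : ℕ) : ℝ))
        = ((m+1).factorial : ℝ) * ((d:ℝ) * _) := by ring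
      _ ≤ ((m+1).factorial : ℝ) * (((m:ℝ)+2) * (c:ℝ)) := mul_le_mul_of_nonneg_left hcast hF1
      _ = (c:ℝ) * ((m+2).factorial : ℝ) := by rw [hfac]; ring
      _ ≤ (1-ε) * (d:ℝ)^(m+2) := hcF
      _ = (d:ℝ) * ((1-ε) * (d:ℝ)^(m+1)) := by ring
  · unfold lowerD
    rw [dif_neg h]
    push_cast
    have : (0:ℝ) ≤ (1-ε) * (d:ℝ)^(m+1) := by
      apply mul_nonneg (by linarith) (by positivity)
    simpa using this

lemma myKeyB (m : ℕ) (ε : ℝ) (hε0 : 0 < ε) (hε1 : ε < 1) (d : ℕ) (hd : 1 ≤ d) (c : ℕ)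
    (hc : (c:ℝ) ≤ (1 - ε) * (d:ℝ)^(m+2) / ((m+2).factorial : ℝ)) :
    ((m+1).factorial : ℝ) * (lowerD d c : ℝ)
      ≤ ((d:ℝ)+(m+2))^(m+1) - (max (ε ^ (((m:ℝ)+2))⁻¹ * d - ((m:ℝ)+2)) 0)^(m+1)
        + ((m:ℝ)+1) * ((d:ℝ)+(m+2))^m := by
  have hd0 : (0:ℝ) < (d:ℝ) := by exact_mod_cast hd
  have hFpos : (0:ℝ) < ((m+2).factorial : ℝ) := by exact_mod_cast (m+2).factorial_pos
  have hF1 : (0:ℝ) ≤ ((m+1).factorial : ℝ) := by positivity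
  set εr := ε ^ (((m:ℝ)+2))⁻¹ with hεrdef
  have hεr0 : 0 ≤ εr := Real.rpow_nonneg hε0.le _
  have hεr1 : εr ≤ 1 := Real.rpow_le_one hε0.le hε1.le (by positivity)
  have hmaxle : max (εr * d - ((m:ℝ)+2)) 0 ≤ (d:ℝ) + (m+2) := by
    apply max_le
    · nlinarith [mul_le_mul_of_nonneg_right hεr1 hd0.le]
    · positivity
  have hAB : (max (εr * d - ((m:ℝ)+2)) 0)^(m+1) ≤ ((d:ℝ)+(m+2))^(m+1) :=
    pow_le_pow_left₀ (le_max_right _ _) hmaxle _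
  have hCpos : (0:ℝ) ≤ ((m:ℝ)+1) * ((d:ℝ)+(m+2))^m := by positivity
  -- generic bound for "small" ranges
  have hsmall : ∀ (a b : ℕ) (ψ : ℕ → ℕ), 1 ≤ a →
      (∀ i, a ≤ i → i ≤ b → i ≤ ψ i ∧ ψ i ≤ i + m) →
      ((m+1).factorial) * (∑ i ∈ Finset.Icc a b, ((ψ i - 1).choose i)) ≤ (m+1) * (b+m)^m := by
    intro a b ψ ha hψ
    rcases Nat.eq_zero_or_pos m with hm0 | hmpos
    · subst hm0
      have hz : ∑ i ∈ Finset.Icc a b, ((ψ i - 1).choose i) = 0 := by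
        apply Finset.sum_eq_zero
        intro i hi
        rw [Finset.mem_Icc] at hi
        obtain ⟨h1, h2⟩ := hψ i hi.1 hi.2
        have he : ψ i = i := by omega
        rw [he]
        exact Nat.choose_eq_zero_of_lt (by omega)
      rw [hz]; simp
    · obtain ⟨m', rfl⟩ : ∃ m', m = m' + 1 := ⟨m-1, by omega⟩
      have hb : ∑ i ∈ Finset.Icc a b, ((ψ i - 1).choose i) ≤ (b + m' + 1).choose (m'+1) :=
        mySumChooseLe m' a b (fun i => ψ i - 1)
          (fun i h1 h2 => by have := hψ i h1 h2; show ψ i - 1 ≤ i + m'; omega)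
      calc (m'+1+1).factorial * (∑ i ∈ Finset.Icc a b, ((ψ i - 1).choose i))
          ≤ (m'+2).factorial * ((b+m'+1).choose (m'+1)) := Nat.mul_le_mul_left _ hb
        _ = (m'+2) * ((m'+1).factorial * (b+m'+1).choose (m'+1)) := by
            rw [Nat.factorial_succ (m'+1)]; ring
        _ = (m'+2) * ((b+m'+1).descFactorial (m'+1)) := by
            rw [Nat.descFactorial_eq_factorial_mul_choose]
        _ ≤ (m'+2) * ((b+m'+1)^(m'+1)) :=
            Nat.mul_le_mul_left _ (Nat.descFactorial_le_pow _ _)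
        _ = (m'+1+1) * (b+(m'+1))^(m'+1) := by rw [show b + m' + 1 = b + (m'+1) from by omega]
  by_cases h : ∃ p : ℕ × (ℕ → ℕ), IsDDecomp d c p.1 p.2
  · have hspec := h.choose_spec
    set r := h.choose.1 with hrdef
    set φ := h.choose.2 with hφdef
    have hval : lowerD d c = ∑ i ∈ Finset.Icc r d, ((φ i - 1).choose i) := by
      unfold lowerD; rw [dif_pos h]
    have hub : φ d ≤ d + (m+1) := myHub m ε hε0 d hd c r φ h.choose_spec hc
    obtain ⟨hr1, hrd, hφr, hinc, hceq⟩ := hspec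
    have hmono := myPhiAdd φ r d hinc
    have hubAll : ∀ i, r ≤ i → i ≤ d → φ i ≤ i + (m+1) := by
      intro i h1 h2
      have := hmono (d-i) i h1 (by omega)
      rw [show i + (d-i) = d from by omega] at this
      omega
    have hlbAll : ∀ i, r ≤ i → i ≤ d → i ≤ φ i := by
      intro i h1 h2
      have := hmono (i-r) r le_rfl (by omega)
      rw [show r + (i-r) = i from by omega] at this
      omega
    by_cases hT : ∃ t, (r ≤ t ∧ t ≤ d) ∧ φ t = t + (m+1)
    · -- case B
      obtain ⟨t, ⟨⟨hrt, htd⟩, hφt⟩, hmin⟩ :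
          ∃ t, ((r ≤ t ∧ t ≤ d) ∧ φ t = t + (m+1)) ∧
            ∀ i, i < t → ¬((r ≤ i ∧ i ≤ d) ∧ φ i = i + (m+1)) :=
        ⟨Nat.find hT, Nat.find_spec hT, fun i hi => Nat.find_min hT hi⟩
      have hlowub : ∀ i, r ≤ i → i < t → φ i ≤ i + m := by
        intro i h1 h2
        have h3 := hubAll i h1 (by omega)
        have h4 := hmin i h2
        by_contra hcon
        push_neg at hcon
        exact h4 ⟨⟨h1, by omega⟩, by omega⟩
      have htopEq : ∀ i, t ≤ i → i ≤ d → φ i = i + (m+1) := by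
        intro i h1 h2
        have h3 := hmono (i-t) t hrt (by omega)
        rw [show t + (i-t) = i from by omega] at h3
        have := hubAll i (by omega) h2
        omega
      have hsplit : ∀ ψ : ℕ → ℕ, (∑ i ∈ Finset.Icc r d, ψ i)
          = (∑ i ∈ Finset.Ico r t, ψ i) + ∑ i ∈ Finset.Icc t d, ψ i := by
        intro ψ
        rw [← Finset.Ico_add_one_right_eq_Icc, ← Finset.sum_Ico_consecutive ψ hrt (by omega : t ≤ d + 1),
          Finset.Ico_add_one_right_eq_Icc]
      have htopS : ∑ i ∈ Finset.Icc t d, ((φ i - 1).choose i)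
          = ∑ i ∈ Finset.Icc t d, ((i+m).choose m) := by
        apply Finset.sum_congr rfl
        intro i hi
        rw [Finset.mem_Icc] at hi
        rw [htopEq i hi.1 hi.2, show i + (m+1) - 1 = i + m from by omega]
        have := Nat.choose_symm (Nat.le_add_right i m)
        rw [Nat.add_sub_cancel_left] at this
        exact this.symm
      have htopC : ∑ i ∈ Finset.Icc t d, ((φ i).choose i)
          = ∑ i ∈ Finset.Icc t d, ((i+(m+1)).choose (m+1)) := by
        apply Finset.sum_congr rfl
        intro i hi
        rw [Finset.mem_Icc] at hi
        rw [htopEq i hi.1 hi.2]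
        have := Nat.choose_symm (Nat.le_add_right i (m+1))
        rw [Nat.add_sub_cancel_left] at this
        exact this.symm
      have hHS := myHockeyEq m t d htd
      have hHC := myHockeyEq (m+1) t d htd
      have hclow : (∑ i ∈ Finset.Icc t d, ((i+(m+1)).choose (m+1))) ≤ c := by
        rw [hceq, hsplit (fun i => (φ i).choose i), htopC]
        omega
      -- t lower bound over ℝ
      have hN1 : (d:ℕ)^(m+2) ≤ (m+2).factorial * ((d+(m+1)+1).choose (m+2)) := by
        have h5 := myPowDescA d (m+2)
        rw [Nat.descFactorial_eq_factorial_mul_choose] at h5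
        rwa [show d + (m+2) = d+(m+1)+1 from by omega] at h5
      have hN2 : (m+2).factorial * ((t+(m+1)).choose (m+2)) ≤ (t+(m+2))^(m+2) := by
        rw [← Nat.descFactorial_eq_factorial_mul_choose]
        calc (t+(m+1)).descFactorial (m+2) ≤ (t+(m+1))^(m+2) := Nat.descFactorial_le_pow _ _
          _ ≤ (t+(m+2))^(m+2) := Nat.pow_le_pow_left (by omega) _
      have hFc : (c:ℝ) * ((m+2).factorial : ℝ) ≤ (1-ε) * (d:ℝ)^(m+2) :=
        (le_div_iff₀ hFpos).mp hc
      have hεd : ε * (d:ℝ)^(m+2) ≤ ((t:ℝ)+((m:ℝ)+2))^(m+2) := by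
        have e1 : ((m+2).factorial : ℝ) * (((t+(m+1)).choose (m+2) : ℕ) : ℝ)
            ≤ ((t:ℝ)+((m:ℝ)+2))^(m+2) := by
          have := hN2
          have e : (((t+(m+2))^(m+2) : ℕ) : ℝ) = ((t:ℝ)+((m:ℝ)+2))^(m+2) := by push_cast; ring
          rw [← e]
          exact_mod_cast this
        have e2 : (d:ℝ)^(m+2) ≤ ((m+2).factorial : ℝ) * (((d+(m+1)+1).choose (m+2) : ℕ) : ℝ) := by
          exact_mod_cast hN1
        have e3 : (((t+(m+1)).choose (m+2) : ℕ) : ℝ)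
            = (((d+(m+1)+1).choose (m+2) : ℕ) : ℝ)
              - ((∑ i ∈ Finset.Icc t d, ((i+(m+1)).choose (m+1)) : ℕ) : ℝ) := by
          have := hHC
          have : ((∑ i ∈ Finset.Icc t d, ((i+(m+1)).choose (m+1)) : ℕ) : ℝ)
              + (((t+(m+1)).choose (m+2) : ℕ) : ℝ) = (((d+(m+1)+1).choose (m+2) : ℕ) : ℝ) := by
            exact_mod_cast this
          linarith
        have e4 : ((∑ i ∈ Finset.Icc t d, ((i+(m+1)).choose (m+1)) : ℕ) : ℝ) ≤ (c:ℝ) := by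
          exact_mod_cast hclow
        have e5 := mul_le_mul_of_nonneg_left e4 hFpos.le
        have hexp : (1-ε) * (d:ℝ)^(m+2) = (d:ℝ)^(m+2) - ε * (d:ℝ)^(m+2) := by ring
        nlinarith
      have htR : εr * d - ((m:ℝ)+2) ≤ (t:ℝ) := by
        have hpow : (εr * d)^(m+2) = ε * (d:ℝ)^(m+2) := by
          rw [mul_pow]
          congr 1
          rw [hεrdef, ← Real.rpow_natCast (ε ^ (((m:ℝ)+2))⁻¹) (m+2), ← Real.rpow_mul hε0.le]
          rw [show (((m+2 : ℕ)):ℝ) = (m:ℝ)+2 from by push_cast; ring]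
          rw [inv_mul_cancel₀ (by positivity), Real.rpow_one]
        have hle : εr * d ≤ (t:ℝ) + ((m:ℝ)+2) := by
          apply le_of_pow_le_pow_left₀ (show m+2 ≠ 0 from by omega) (by positivity)
          rw [hpow]
          exact hεd
        linarith
      have hmaxt : (max (εr * d - ((m:ℝ)+2)) 0)^(m+1)
          ≤ ((m+1).factorial : ℝ) * (((t+m).choose (m+1) : ℕ) : ℝ) := by
        have h1 : max (εr * d - ((m:ℝ)+2)) 0 ≤ (t:ℝ) := max_le htR (Nat.cast_nonneg t)
        have h2 : (max (εr*d - ((m:ℝ)+2)) 0)^(m+1) ≤ (t:ℝ)^(m+1) :=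
          pow_le_pow_left₀ (le_max_right _ _) h1 _
        have h3 : (t:ℕ)^(m+1) ≤ (m+1).factorial * ((t+m).choose (m+1)) := by
          have := myPowDescB t m
          rwa [Nat.descFactorial_eq_factorial_mul_choose] at this
        have h4 : ((t:ℝ))^(m+1) ≤ ((m+1).factorial : ℝ) * (((t+m).choose (m+1) : ℕ) : ℝ) := by
          exact_mod_cast h3
        linarith
      have hdm : ((m+1).factorial : ℝ) * (((d+m+1).choose (m+1) : ℕ) : ℝ)
          ≤ ((d:ℝ)+((m:ℝ)+2))^(m+1) := by
        have h5 : (m+1).factorial * ((d+m+1).choose (m+1)) ≤ (d+m+1)^(m+1) := by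
          rw [← Nat.descFactorial_eq_factorial_mul_choose]
          exact Nat.descFactorial_le_pow _ _
        have h6 : ((d+m+1:ℕ):ℝ)^(m+1) ≤ ((d:ℝ)+((m:ℝ)+2))^(m+1) := by
          apply pow_le_pow_left₀ (by positivity)
          push_cast; linarith
        have h7 : ((m+1).factorial : ℝ) * (((d+m+1).choose (m+1) : ℕ) : ℝ)
            ≤ ((d+m+1:ℕ):ℝ)^(m+1) := by exact_mod_cast h5
        linarith
      -- low part
      have hlowN : ((m+1).factorial) * (∑ i ∈ Finset.Ico r t, ((φ i - 1).choose i))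
          ≤ (m+1) * (d+m)^m := by
        rcases Nat.lt_or_ge r t with hrt' | hrt'
        · have hIcoIcc : Finset.Ico r t = Finset.Icc r (t-1) := by
            rw [← Finset.Ico_add_one_right_eq_Icc]
            congr 1
            omega
          rw [hIcoIcc]
          have := hsmall r (t-1) φ hr1 (fun i h1 h2 => ⟨hlbAll i h1 (by omega), hlowub i h1 (by omega)⟩)
          calc ((m+1).factorial) * (∑ i ∈ Finset.Icc r (t-1), ((φ i - 1).choose i))
              ≤ (m+1) * ((t-1)+m)^m := this
            _ ≤ (m+1) * (d+m)^m :=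
              Nat.mul_le_mul_left _ (Nat.pow_le_pow_left (by omega) _)
        · rw [Finset.Ico_eq_empty (by omega), Finset.sum_empty]
          simp
      have hlowR : ((m+1).factorial : ℝ) * ((∑ i ∈ Finset.Ico r t, ((φ i - 1).choose i) : ℕ) : ℝ)
          ≤ ((m:ℝ)+1) * ((d:ℝ)+((m:ℝ)+2))^m := by
        have c1 : ((m+1).factorial : ℝ) * ((∑ i ∈ Finset.Ico r t, ((φ i - 1).choose i) : ℕ) : ℝ)
            ≤ ((m:ℝ)+1) * ((d+m : ℕ):ℝ)^m := by exact_mod_cast hlowN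
        have c2 : ((d+m:ℕ):ℝ)^m ≤ ((d:ℝ)+((m:ℝ)+2))^m := by
          apply pow_le_pow_left₀ (by positivity)
          push_cast; linarith
        calc ((m+1).factorial : ℝ) * ((∑ i ∈ Finset.Ico r t, ((φ i - 1).choose i) : ℕ) : ℝ)
            ≤ ((m:ℝ)+1) * ((d+m : ℕ):ℝ)^m := c1
          _ ≤ ((m:ℝ)+1) * ((d:ℝ)+((m:ℝ)+2))^m :=
              mul_le_mul_of_nonneg_left c2 (by positivity)
      -- top part over ℝ
      have htopR : ((m+1).factorial : ℝ) * ((∑ i ∈ Finset.Icc t d, ((φ i - 1).choose i) : ℕ) : ℝ)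
          = ((m+1).factorial : ℝ) * (((d+m+1).choose (m+1) : ℕ) : ℝ)
            - ((m+1).factorial : ℝ) * (((t+m).choose (m+1) : ℕ) : ℝ) := by
        rw [htopS]
        have : ((∑ i ∈ Finset.Icc t d, ((i+m).choose m) : ℕ) : ℝ)
            + (((t+m).choose (m+1) : ℕ) : ℝ) = (((d+m+1).choose (m+1) : ℕ) : ℝ) := by
          exact_mod_cast hHS
        have e : ((∑ i ∈ Finset.Icc t d, ((i+m).choose m) : ℕ) : ℝ)
            = (((d+m+1).choose (m+1) : ℕ) : ℝ) - (((t+m).choose (m+1) : ℕ) : ℝ) := by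
          linarith [this]
        rw [e]
        ring
      -- assemble
      rw [hval, hsplit (fun i => (φ i - 1).choose i)]
      push_cast [Nat.cast_add]
      have hfinal := htopR
      push_cast at hfinal hlowR hmaxt hdm
      linarith
    · -- case A
      have hlowub : ∀ i, r ≤ i → i ≤ d → φ i ≤ i + m := by
        intro i h1 h2
        have h3 := hubAll i h1 h2
        have : ¬ ((r ≤ i ∧ i ≤ d) ∧ φ i = i + (m+1)) := fun hcon => hT ⟨i, hcon⟩
        omega
      have hN := hsmall r d φ hr1 (fun i h1 h2 => ⟨hlbAll i h1 h2, hlowub i h1 h2⟩)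
      have hR : ((m+1).factorial : ℝ) * ((∑ i ∈ Finset.Icc r d, ((φ i - 1).choose i) : ℕ) : ℝ)
          ≤ ((m:ℝ)+1) * ((d:ℝ)+((m:ℝ)+2))^m := by
        have c1 : ((m+1).factorial : ℝ) * ((∑ i ∈ Finset.Icc r d, ((φ i - 1).choose i) : ℕ) : ℝ)
            ≤ ((m:ℝ)+1) * ((d+m : ℕ):ℝ)^m := by exact_mod_cast hN
        have c2 : ((d+m:ℕ):ℝ)^m ≤ ((d:ℝ)+((m:ℝ)+2))^m := by
          apply pow_le_pow_left₀ (by positivity)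
          push_cast; linarith
        calc ((m+1).factorial : ℝ) * ((∑ i ∈ Finset.Icc r d, ((φ i - 1).choose i) : ℕ) : ℝ)
            ≤ ((m:ℝ)+1) * ((d+m : ℕ):ℝ)^m := c1
          _ ≤ ((m:ℝ)+1) * ((d:ℝ)+((m:ℝ)+2))^m :=
              mul_le_mul_of_nonneg_left c2 (by positivity)
      rw [hval]
      linarith
  · unfold lowerD
    rw [dif_neg h]
    push_cast
    simp only [mul_zero]
    linarith

noncomputable def myG (m : ℕ) (ε : ℝ) (d : ℕ) : ℝ :=
  1 - (((d:ℝ)+(m+2))^(m+1) - (max (ε ^ (((m:ℝ)+2))⁻¹ * d - ((m:ℝ)+2)) 0)^(m+1)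
      + ((m:ℝ)+1) * ((d:ℝ)+(m+2))^m) / (d:ℝ)^(m+1)

lemma myGlt1 (m : ℕ) (ε : ℝ) (hε0 : 0 < ε) (hε1 : ε < 1) (d : ℕ) (hd : 1 ≤ d) :
    myG m ε d < 1 := by
  have hd0 : (0:ℝ) < (d:ℝ) := by exact_mod_cast hd
  have hεr1 : ε ^ (((m:ℝ)+2))⁻¹ ≤ 1 := Real.rpow_le_one hε0.le hε1.le (by positivity)
  have hmaxle : max (ε ^ (((m:ℝ)+2))⁻¹ * d - ((m:ℝ)+2)) 0 ≤ (d:ℝ) + ((m:ℝ)+2) := by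
    apply max_le
    · nlinarith [mul_le_mul_of_nonneg_right hεr1 hd0.le]
    · positivity
  have hAB : (max (ε ^ (((m:ℝ)+2))⁻¹ * d - ((m:ℝ)+2)) 0)^(m+1) ≤ ((d:ℝ)+((m:ℝ)+2))^(m+1) :=
    pow_le_pow_left₀ (le_max_right _ _) hmaxle _
  have hC : (0:ℝ) < ((m:ℝ)+1) * ((d:ℝ)+((m:ℝ)+2))^m := by positivity
  have hpos : 0 < (((d:ℝ)+(m+2))^(m+1)
      - (max (ε ^ (((m:ℝ)+2))⁻¹ * d - ((m:ℝ)+2)) 0)^(m+1)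
      + ((m:ℝ)+1) * ((d:ℝ)+(m+2))^m) / (d:ℝ)^(m+1) := by
    apply div_pos _ (pow_pos hd0 _)
    linarith
  simp only [myG]
  linarith

lemma myGtendsto (m : ℕ) (ε : ℝ) (hε0 : 0 < ε) (hε1 : ε < 1) :
    Tendsto (fun d : ℕ => myG m ε d) atTop (𝓝 (ε ^ (((m:ℝ)+1)/((m:ℝ)+2)))) := by
  have h0 : Tendsto (fun d:ℕ => ((m:ℝ)+2)/d) atTop (𝓝 0) :=
    tendsto_const_div_atTop_nhds_zero_nat _
  have h1 : Tendsto (fun d:ℕ => ((m:ℝ)+1)/d) atTop (𝓝 0) :=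
    tendsto_const_div_atTop_nhds_zero_nat _
  have base : Tendsto (fun d:ℕ => 1 + ((m:ℝ)+2)/d) atTop (𝓝 (1 + 0)) :=
    tendsto_const_nhds.add h0
  have hA : Tendsto (fun d:ℕ => (1 + ((m:ℝ)+2)/d)^(m+1)) atTop (𝓝 1) := by
    have := base.pow (m+1)
    simpa using this
  have hB : Tendsto (fun d:ℕ => (max (ε ^ (((m:ℝ)+2))⁻¹ - ((m:ℝ)+2)/d) 0)^(m+1)) atTop
      (𝓝 ((ε ^ (((m:ℝ)+2))⁻¹)^(m+1))) := by
    have base2 : Tendsto (fun d:ℕ => max (ε ^ (((m:ℝ)+2))⁻¹ - ((m:ℝ)+2)/d) 0) atTop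
        (𝓝 (max (ε ^ (((m:ℝ)+2))⁻¹ - 0) 0)) := (tendsto_const_nhds.sub h0).max tendsto_const_nhds
    have := base2.pow (m+1)
    simpa [max_eq_left (Real.rpow_nonneg hε0.le _)] using this
  have hC : Tendsto (fun d:ℕ => (((m:ℝ)+1)/d) * (1 + ((m:ℝ)+2)/d)^m) atTop (𝓝 0) := by
    have := h1.mul (base.pow m)
    simpa using this
  have hcomb : Tendsto (fun d:ℕ => (1:ℝ) - ((1 + ((m:ℝ)+2)/d)^(m+1)
        - (max (ε ^ (((m:ℝ)+2))⁻¹ - ((m:ℝ)+2)/d) 0)^(m+1)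
        + (((m:ℝ)+1)/d) * (1 + ((m:ℝ)+2)/d)^m)) atTop
      (𝓝 (1 - (1 - (ε ^ (((m:ℝ)+2))⁻¹)^(m+1) + 0))) :=
    tendsto_const_nhds.sub ((hA.sub hB).add hC)
  have hform : (fun d:ℕ => (1:ℝ) - ((1 + ((m:ℝ)+2)/d)^(m+1)
        - (max (ε ^ (((m:ℝ)+2))⁻¹ - ((m:ℝ)+2)/d) 0)^(m+1)
        + (((m:ℝ)+1)/d) * (1 + ((m:ℝ)+2)/d)^m))
      =ᶠ[atTop] (fun d : ℕ => myG m ε d) := by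
    filter_upwards [eventually_ge_atTop 1] with d hd
    have hd0 : (0:ℝ) < (d:ℝ) := by exact_mod_cast hd
    have e1 : 1 + ((m:ℝ)+2)/d = ((d:ℝ) + ((m:ℝ)+2))/d := by field_simp
    have e2 : max (ε ^ (((m:ℝ)+2))⁻¹ - ((m:ℝ)+2)/d) 0
        = (max (ε ^ (((m:ℝ)+2))⁻¹ * d - ((m:ℝ)+2)) 0)/d := by
      rw [eq_div_iff hd0.ne', max_mul_of_nonneg _ _ hd0.le, zero_mul, sub_mul,
        div_mul_cancel₀ _ hd0.ne']
    rw [e1, e2]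
    simp only [myG]
    rw [div_pow, div_pow, div_pow]
    field_simp
    ring
  have hlimeq : (1:ℝ) - (1 - (ε ^ (((m:ℝ)+2))⁻¹)^(m+1) + 0)
      = ε ^ (((m:ℝ)+1)/((m:ℝ)+2)) := by
    rw [← Real.rpow_natCast (ε ^ (((m:ℝ)+2))⁻¹) (m+1), ← Real.rpow_mul hε0.le]
    rw [show (((m:ℝ)+2))⁻¹ * (((m+1:ℕ)):ℝ) = ((m:ℝ)+1)/((m:ℝ)+2) from by push_cast; ring]
    ring
  rw [← hlimeq]
  exact Tendsto.congr' hform hcomb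

theorem stmt0 (M : ℕ) (hM : 2 ≤ M) :
    ∃ f : ℝ → ℕ → ℝ,
      (∀ ε ∈ Set.Ioo (0:ℝ) 1, ∀ d : ℕ, f ε d ∈ Set.Ioo (0:ℝ) 1) ∧
      (∀ ε ∈ Set.Ioo (0:ℝ) 1,
        Tendsto (fun d : ℕ => f ε d) atTop (nhds (ε ^ (((M : ℝ) - 1) / (M : ℝ))))) ∧
      (∀ ε ∈ Set.Ioo (0:ℝ) 1, ∀ d : ℕ, 0 < d → ∀ c : ℕ,
        (c : ℝ) ≤ (1 - ε) * (d : ℝ) ^ M / (Nat.factorial M : ℝ) →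
        (lowerD d c : ℝ) ≤ (1 - f ε d) * (d : ℝ) ^ (M - 1) / (Nat.factorial (M - 1) : ℝ)) := by
  obtain ⟨m, rfl⟩ : ∃ m, M = m + 2 := ⟨M - 2, by omega⟩
  refine ⟨fun ε d => if d = 0 then ε else max ε (myG m ε d), ?_, ?_, ?_⟩
  · rintro ε ⟨hε0, hε1⟩ d
    by_cases hd : d = 0
    · simp only [hd, if_pos]
      exact ⟨hε0, hε1⟩
    · simp only [if_neg hd]
      constructor
      · exact lt_max_of_lt_left hε0
      · exact max_lt hε1 (myGlt1 m ε hε0 hε1 d (by omega))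
  · rintro ε ⟨hε0, hε1⟩
    have hexp : (((m+2:ℕ)):ℝ) = (m:ℝ)+2 := by push_cast; ring
    have hgoalexp : ((((m+2:ℕ)):ℝ) - 1) / (((m+2:ℕ)):ℝ) = ((m:ℝ)+1)/((m:ℝ)+2) := by
      rw [hexp]; ring
    rw [hgoalexp]
    have hten := myGtendsto m ε hε0 hε1
    have hlt : ε < ε ^ (((m:ℝ)+1)/((m:ℝ)+2)) := by
      have h2 : ((m:ℝ)+1)/((m:ℝ)+2) < 1 := by
        rw [div_lt_one (by positivity)]; linarith
      have := Real.rpow_lt_rpow_of_exponent_gt hε0 hε1 h2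
      rwa [Real.rpow_one] at this
    have hev : ∀ᶠ d : ℕ in atTop, ε < myG m ε d := hten.eventually (eventually_gt_nhds hlt)
    apply Tendsto.congr' _ hten
    filter_upwards [hev, eventually_ge_atTop 1] with d h1 h2
    rw [if_neg (by omega : ¬ d = 0), max_eq_right h1.le]
  · rintro ε ⟨hε0, hε1⟩ d hd c hc
    have hd1 : ¬ d = 0 := by omega
    simp only [if_neg hd1]
    rw [show m + 2 - 1 = m + 1 from rfl]
    have hF1 : (0:ℝ) < ((m+1).factorial : ℝ) := by exact_mod_cast (m+1).factorial_pos
    rcases max_cases ε (myG m ε d) with ⟨hEq, _⟩ | ⟨hEq, _⟩ <;> rw [hEq]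
    · rw [le_div_iff₀ hF1, mul_comm]
      exact myKeyA m ε hε0 hε1 d hd c hc
    · have hkb := myKeyB m ε hε0 hε1 d hd c hc
      have hd0 : (0:ℝ) < (d:ℝ) := by exact_mod_cast hd
      have hstuff : (1 - myG m ε d) * (d:ℝ)^(m+1)
          = ((d:ℝ)+(m+2))^(m+1) - (max (ε ^ (((m:ℝ)+2))⁻¹ * d - ((m:ℝ)+2)) 0)^(m+1)
            + ((m:ℝ)+1) * ((d:ℝ)+(m+2))^m := by
        simp only [myG]
        field_simp
        ring
      rw [le_div_iff₀ hF1, mul_comm, hstuff]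
      exact hkb
end

section
/- For every integer M ≥ 2, every ε ∈ (0,1) and every δ > 0, there exists an integer D such that for all integers d ≥ D and all nonnegative integers c with c ≤ (1 − ε)·d^M / M!, one has c_{<d>} ≤ (1 − ε^{(M−1)/M} + δ)·d^{M−1} / (M−1)!. -/
set_option maxHeartbeats 1000000


open Filter Finset
open scoped Classical

lemma hockey (k : ℕ) : ∀ (d u : ℕ), u ≤ d + 1 →
    (u+k).choose (k+1) + ∑ i ∈ Icc u d, (i+k).choose k = (d+k+1).choose (k+1) := by
  intro d
  induction d with
  | zero =>
    intro u hu
    interval_cases u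
    · simp [Nat.choose_succ_self]
    · simp [Nat.add_comm 1 k]
  | succ d ih =>
    intro u hu
    rcases Nat.lt_or_ge u (d + 2) with h | h
    · have hu' : u ≤ d + 1 := by omega
      rw [Finset.sum_Icc_succ_top hu', ← Nat.add_assoc, ih u hu',
        show d + 1 + k = d + k + 1 from by omega,
        Nat.choose_succ_succ (d + k + 1) k]
      exact Nat.add_comm _ _
    · have : u = d + 2 := by omega
      subst this
      rw [Finset.Icc_eq_empty (by omega), Finset.sum_empty, Nat.add_zero,
        show d + 2 + k = d + 1 + k + 1 from by omega]

lemma fact_mul_choose_le_pow (n k : ℕ) : Nat.factorial k * n.choose k ≤ n ^ k := by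
  rw [← Nat.descFactorial_eq_factorial_mul_choose]
  exact Nat.descFactorial_le_pow n k

lemma pow_le_fact_mul_choose (n k : ℕ) : n ^ k ≤ Nat.factorial k * (n + k - 1).choose k := by
  calc n ^ k ≤ n.ascFactorial k := Nat.pow_succ_le_ascFactorial n k
  _ = Nat.factorial k * (n + k - 1).choose k := Nat.ascFactorial_eq_factorial_mul_choose' n k

theorem stmt1 (M : ℕ) (hM : 2 ≤ M) (ε : ℝ) (hε : ε ∈ Set.Ioo (0:ℝ) 1) (δ : ℝ) (hδ : 0 < δ) :
    ∃ D : ℕ, ∀ d : ℕ, D ≤ d → ∀ c : ℕ,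
      (c : ℝ) ≤ (1 - ε) * (d : ℝ) ^ M / (Nat.factorial M : ℝ) →
      (lowerD d c : ℝ) ≤
        (1 - ε ^ (((M : ℝ) - 1) / (M : ℝ)) + δ) * (d : ℝ) ^ (M - 1) / (Nat.factorial (M - 1) : ℝ) := by
  obtain ⟨m, rfl⟩ : ∃ m, M = m + 2 := ⟨M - 2, by omega⟩
  obtain ⟨hε0, hε1⟩ := hε
  set t : ℝ := ε ^ (((m:ℝ) + 2)⁻¹) with ht
  have hMcast : ((m + 2 : ℕ) : ℝ) = (m : ℝ) + 2 := by push_cast; ring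
  have hMne : ((m:ℝ) + 2) ≠ 0 := by positivity
  have htpos : 0 < t := Real.rpow_pos_of_pos hε0 _
  have ht1 : t < 1 := Real.rpow_lt_one hε0.le hε1 (by positivity)
  -- t ^ (m+2) = ε
  have htM : t ^ (m + 2) = ε := by
    rw [ht, ← Real.rpow_natCast (ε ^ (((m:ℝ) + 2)⁻¹)) (m + 2), ← Real.rpow_mul hε0.le]
    rw [hMcast, inv_mul_cancel₀ hMne, Real.rpow_one]
  -- the exponent in the statement equals t ^ (m+1)
  have hθ : ε ^ ((((m + 2 : ℕ) : ℝ) - 1) / ((m + 2 : ℕ) : ℝ)) = t ^ (m + 1) := by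
    rw [ht, ← Real.rpow_natCast (ε ^ (((m:ℝ) + 2)⁻¹)) (m + 1), ← Real.rpow_mul hε0.le]
    congr 1
    rw [hMcast]
    push_cast
    field_simp
    ring
  have hθpos : 0 < 1 - t ^ (m + 1) + δ := by
    have : t ^ (m + 1) < 1 := pow_lt_one₀ htpos.le ht1 (by omega)
    linarith
  set F : ℝ := (Nat.factorial (m + 1) : ℝ) with hF
  have hFpos : (0:ℝ) < F := by positivity
  set G : ℝ → ℝ := fun y => (1 + ((m:ℝ)+1)*y)^(m+1) - (t - ((m:ℝ)+1)*y)^(m+1)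
      + (F * (1 + ((m:ℝ)+2)*y)^m) * y with hG
  have hGcont : Continuous G := by fun_prop
  have hinv : Tendsto (fun n : ℕ => ((n:ℝ))⁻¹) atTop (nhds 0) :=
    tendsto_natCast_atTop_atTop.inv_tendsto_atTop
  have hG0 : G 0 = 1 - t ^ (m + 1) := by simp [hG]
  have hlim : Tendsto (fun n : ℕ => G ((n:ℝ))⁻¹) atTop (nhds (1 - t ^ (m+1))) := by
    have := (hGcont.tendsto 0).comp hinv
    rwa [hG0] at this
  have Ev3 : ∀ᶠ n : ℕ in atTop, G ((n:ℝ))⁻¹ < 1 - t ^ (m+1) + δ :=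
    hlim.eventually (gt_mem_nhds (by linarith))
  have Ev2 : ∀ᶠ n : ℕ in atTop, ((m:ℝ) + 1) ≤ t * n := by
    have : Tendsto (fun n : ℕ => t * (n:ℝ)) atTop atTop :=
      (tendsto_natCast_atTop_atTop).const_mul_atTop htpos
    exact this.eventually_ge_atTop _
  obtain ⟨D, hD⟩ := eventually_atTop.mp ((eventually_ge_atTop 1).and (Ev2.and Ev3))
  refine ⟨D, fun d hd c hc => ?_⟩
  obtain ⟨hd1, hd2, hd3⟩ := hD d hd
  have hdR : (1:ℝ) ≤ (d:ℝ) := by exact_mod_cast hd1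
  have hdne : (d:ℝ) ≠ 0 := by linarith
  -- rewrite the goal
  rw [hθ, show m + 2 - 1 = m + 1 from by omega]
  by_cases h : ∃ p : ℕ × (ℕ → ℕ), IsDDecomp d c p.1 p.2
  case neg =>
    rw [lowerD, dif_neg h, Nat.cast_zero]
    exact div_nonneg (mul_nonneg hθpos.le (by positivity)) (by positivity)
  case pos =>
  rw [lowerD, dif_pos h]
  set r : ℕ := h.choose.1 with hr
  set f : ℕ → ℕ := h.choose.2 with hf
  obtain ⟨hr1, hrd, hrf, hmono, hsum⟩ : IsDDecomp d c r f := h.choose_spec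
  -- monotonicity
  have key : ∀ k i, r ≤ i → i + k ≤ d → f i + k ≤ f (i + k) := by
    intro k
    induction k with
    | zero => intro i _ _; simp
    | succ k ih =>
      intro i hi hle
      have h1 := ih i hi (by omega)
      have h2 := hmono (i + k) (by omega) (by omega)
      show f i + (k+1) ≤ f (i + k + 1)
      omega
  have key2 : ∀ i j, r ≤ i → i ≤ j → j ≤ d → f i + (j - i) ≤ f j := by
    intro i j h1 h2 h3
    have := key (j - i) i h1 (by omega)
    rwa [Nat.add_sub_cancel' h2] at this
  have hfi : ∀ i, r ≤ i → i ≤ d → i ≤ f i := by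
    intro i hi hid
    have := key2 r i le_rfl hi hid
    omega
  -- upper bound f i ≤ i + m + 1
  have hfd : f d ≤ d + m + 1 := by
    by_contra hcon
    push_neg at hcon
    have t1 : (d + (m+2)).choose d ≤ (f d).choose d := Nat.choose_le_choose d (by omega)
    have t2 : (f d).choose d ≤ c := by
      rw [hsum]
      exact Finset.single_le_sum (f := fun i => (f i).choose i) (fun i _ => Nat.zero_le _)
        (Finset.mem_Icc.mpr ⟨hrd, le_rfl⟩)
    have t3 : (d + (m+2)).choose d = (d + (m+2)).choose (m+2) := Nat.choose_symm_add
    have t4 : (d+1)^(m+2) ≤ Nat.factorial (m+2) * (d + (m+2)).choose (m+2) := by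
      have := pow_le_fact_mul_choose (d+1) (m+2)
      rwa [show d + 1 + (m+2) - 1 = d + (m+2) from by omega] at this
    -- real contradiction
    have r1 : ((d:ℝ)+1)^(m+2) ≤ (Nat.factorial (m+2) : ℝ) * c := by
      calc ((d:ℝ)+1)^(m+2) = (((d+1)^(m+2) : ℕ) : ℝ) := by push_cast; ring
      _ ≤ ((Nat.factorial (m+2) * (d + (m+2)).choose (m+2) : ℕ) : ℝ) := by exact_mod_cast t4
      _ ≤ (Nat.factorial (m+2) : ℝ) * c := by
          push_cast
          have : ((d + (m+2)).choose (m+2) : ℝ) ≤ (c:ℝ) := by exact_mod_cast (t3 ▸ t1).trans t2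
          nlinarith [Nat.factorial_pos (m+2)]
    have r2 : (Nat.factorial (m+2) : ℝ) * c ≤ (1 - ε) * (d:ℝ)^(m+2) := by
      rw [div_eq_mul_inv] at hc
      have hfp : (0:ℝ) < (Nat.factorial (m+2) : ℝ) := by positivity
      calc (Nat.factorial (m+2) : ℝ) * c ≤ (Nat.factorial (m+2) : ℝ) *
          ((1 - ε) * (d:ℝ)^(m+2) * ((Nat.factorial (m+2):ℝ))⁻¹) := by
            exact mul_le_mul_of_nonneg_left hc hfp.le
      _ = (1 - ε) * (d:ℝ)^(m+2) := by field_simp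
    have r3 : (d:ℝ)^(m+2) ≤ ((d:ℝ)+1)^(m+2) := by
      apply pow_le_pow_left₀ (by positivity) (by linarith)
    have r4 : (1 - ε) * (d:ℝ)^(m+2) < (d:ℝ)^(m+2) := by
      have : (0:ℝ) < (d:ℝ)^(m+2) := by positivity
      nlinarith
    linarith
  have hub : ∀ i, r ≤ i → i ≤ d → f i ≤ i + m + 1 := by
    intro i hi hid
    have := key2 i d hi hid le_rfl
    omega
  -- the set where f i is maximal
  set T : Finset ℕ := (Icc r d).filter (fun i => i + m + 1 ≤ f i) with hT
  set u : ℕ := if hne : T.Nonempty then T.min' hne else d + 1 with hu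
  have humem : ∀ hne : T.Nonempty, u ∈ T := by
    intro hne; rw [hu, dif_pos hne]; exact T.min'_mem hne
  have hur : r ≤ u := by
    by_cases hne : T.Nonempty
    · have := humem hne; rw [hT, Finset.mem_filter, Finset.mem_Icc] at this; exact this.1.1
    · rw [hu, dif_neg hne]; omega
  have hud : u ≤ d + 1 := by
    by_cases hne : T.Nonempty
    · have := humem hne; rw [hT, Finset.mem_filter, Finset.mem_Icc] at this; omega
    · rw [hu, dif_neg hne]
  have hu1 : 1 ≤ u := le_trans hr1 hur
  have htop : ∀ i, u ≤ i → i ≤ d → f i = i + m + 1 := by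
    intro i hui hid
    have hne : T.Nonempty := by
      by_contra hcon
      rw [hu, dif_neg hcon] at hui; omega
    have hmem := humem hne
    rw [hT, Finset.mem_filter, Finset.mem_Icc] at hmem
    obtain ⟨⟨hru, hudd⟩, hfu⟩ := hmem
    have := key2 u i hru hui hid
    have := hub i (le_trans hru hui) hid
    omega
  have hbot : ∀ i, r ≤ i → i ≤ d → i < u → f i ≤ i + m := by
    intro i hi hid hiu
    by_contra hcon
    push_neg at hcon
    have hiT : i ∈ T := by
      rw [hT, Finset.mem_filter, Finset.mem_Icc]; exact ⟨⟨hi, hid⟩, by omega⟩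
    have hne : T.Nonempty := ⟨i, hiT⟩
    have : u ≤ i := by rw [hu, dif_pos hne]; exact T.min'_le i hiT
    omega
  -- split sums
  have hfiltU : (Icc r d).filter (fun i => u ≤ i) = Icc u d := by
    ext i
    simp only [Finset.mem_filter, Finset.mem_Icc]
    omega
  -- lower bound on c
  have hmainc : ∑ i ∈ Icc u d, (f i).choose i = ∑ i ∈ Icc u d, (i + (m+1)).choose (m+1) := by
    apply Finset.sum_congr rfl
    intro i hi
    rw [Finset.mem_Icc] at hi
    rw [htop i hi.1 hi.2]
    exact Nat.choose_symm_add (a := i) (b := m+1)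
  have hclow : (d + (m+1) + 1).choose (m+2) ≤ c + (u + (m+1)).choose (m+2) := by
    have hh := hockey (m+1) d u hud
    simp only [show m+1+1 = m+2 from rfl] at hh
    have hle : ∑ i ∈ Icc u d, (i + (m+1)).choose (m+1) ≤ c := by
      rw [hsum, ← hmainc, ← hfiltU]
      exact Finset.sum_le_sum_of_subset (Finset.filter_subset _ _)
    omega
  -- upper bound on S
  have hmainS : ∑ i ∈ Icc u d, ((f i - 1).choose i) = ∑ i ∈ Icc u d, (i + m).choose m := by
    apply Finset.sum_congr rfl
    intro i hi
    rw [Finset.mem_Icc] at hi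
    rw [htop i hi.1 hi.2, show i + m + 1 - 1 = i + m from by omega]
    exact Nat.choose_symm_add (a := i) (b := m)
  have hjunk : ∑ i ∈ (Icc r d).filter (fun i => ¬ u ≤ i), ((f i - 1).choose i)
      ≤ (d + m).choose m := by
    have hterm : ∀ i ∈ (Icc r d).filter (fun i => ¬ u ≤ i),
        (f i - 1).choose i ≤ (i + m - 1).choose i := by
      intro i hi
      rw [Finset.mem_filter, Finset.mem_Icc] at hi
      apply Nat.choose_le_choose
      have := hbot i hi.1.1 hi.1.2 (by omega)
      omega
    calc ∑ i ∈ (Icc r d).filter (fun i => ¬ u ≤ i), ((f i - 1).choose i)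
        ≤ ∑ i ∈ (Icc r d).filter (fun i => ¬ u ≤ i), (i + m - 1).choose i :=
          Finset.sum_le_sum hterm
    _ ≤ (d + m).choose m := by
        rcases m with _ | k
        · -- m = 0 : every term is zero
          have : ∀ i ∈ (Icc r d).filter (fun i => ¬ u ≤ i), (i + 0 - 1).choose i = 0 := by
            intro i hi
            rw [Finset.mem_filter, Finset.mem_Icc] at hi
            exact Nat.choose_eq_zero_of_lt (by omega)
          rw [Finset.sum_congr rfl this]
          simp
        · -- m = k + 1
          have hsub : (Icc r d).filter (fun i => ¬ u ≤ i) ⊆ Icc 0 d := by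
            intro i hi
            rw [Finset.mem_filter, Finset.mem_Icc] at hi
            rw [Finset.mem_Icc]
            omega
          calc ∑ i ∈ (Icc r d).filter (fun i => ¬ u ≤ i), (i + (k+1) - 1).choose i
              = ∑ i ∈ (Icc r d).filter (fun i => ¬ u ≤ i), (i + k).choose k := by
                apply Finset.sum_congr rfl
                intro i _
                rw [show i + (k+1) - 1 = i + k from by omega]
                exact Nat.choose_symm_add (a := i) (b := k)
          _ ≤ ∑ i ∈ Icc 0 d, (i + k).choose k := Finset.sum_le_sum_of_subset hsub
          _ ≤ (d + k + 1).choose (k+1) := by have := hockey k d 0 (by omega); omega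
          _ = (d + (k+1)).choose (k+1) := by rw [show d + k + 1 = d + (k+1) from by omega]
  set S : ℕ := ∑ i ∈ Icc r d, ((f i - 1).choose i) with hS
  have hShigh : S + (u + m).choose (m+1) ≤ (d + m + 1).choose (m+1) + (d + m).choose m := by
    have hsplit := Finset.sum_filter_add_sum_filter_not (Icc r d) (fun i => u ≤ i)
      (fun i => (f i - 1).choose i)
    have hh := hockey m d u hud
    rw [hS, ← hsplit, hfiltU, hmainS]
    omega
  -- now go to the reals
  have hN1 : ((d + (m+1) + 1).choose (m+2) : ℝ) ≤ (c:ℝ) + ((u + (m+1)).choose (m+2) : ℝ) := by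
    exact_mod_cast hclow
  have hN2 : (S:ℝ) + ((u + m).choose (m+1) : ℝ)
      ≤ ((d + m + 1).choose (m+1) : ℝ) + ((d + m).choose m : ℝ) := by exact_mod_cast hShigh
  -- u is large
  have hu_lb : t * (d:ℝ) - ((m:ℝ)+1) ≤ (u:ℝ) := by
    have b1 : ((d:ℝ)+1)^(m+2) ≤ (Nat.factorial (m+2) : ℝ) * ((d + (m+1) + 1).choose (m+2)) := by
      have := pow_le_fact_mul_choose (d+1) (m+2)
      rw [show d + 1 + (m+2) - 1 = d + (m+1) + 1 from by omega] at this
      exact_mod_cast this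
    have b2 : (Nat.factorial (m+2) : ℝ) * c ≤ (1 - ε) * (d:ℝ)^(m+2) := by
      rw [div_eq_mul_inv] at hc
      have hfp : (0:ℝ) < (Nat.factorial (m+2) : ℝ) := by positivity
      calc (Nat.factorial (m+2) : ℝ) * c ≤ (Nat.factorial (m+2) : ℝ) *
          ((1 - ε) * (d:ℝ)^(m+2) * ((Nat.factorial (m+2):ℝ))⁻¹) :=
            mul_le_mul_of_nonneg_left hc hfp.le
      _ = (1 - ε) * (d:ℝ)^(m+2) := by field_simp
    have b3 : (Nat.factorial (m+2) : ℝ) * ((u + (m+1)).choose (m+2)) ≤ ((u:ℝ)+m+1)^(m+2) := by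
      have := fact_mul_choose_le_pow (u + (m+1)) (m+2)
      have := (Nat.cast_le (α := ℝ)).mpr this
      push_cast at this ⊢
      rw [show (u:ℝ) + m + 1 = u + (m + 1) by ring]; exact this
    have b4 : (d:ℝ)^(m+2) ≤ ((d:ℝ)+1)^(m+2) :=
      pow_le_pow_left₀ (by positivity) (by linarith) _
    have b5 : (t * d)^(m+2) = ε * (d:ℝ)^(m+2) := by
      rw [mul_pow, htM]
    have hfp : (0:ℝ) < (Nat.factorial (m+2) : ℝ) := by positivity
    have b6 : (t * d)^(m+2) ≤ ((u:ℝ)+m+1)^(m+2) := by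
      have : (Nat.factorial (m+2) : ℝ) * ((d + (m+1) + 1).choose (m+2))
          ≤ (Nat.factorial (m+2) : ℝ) * ((c:ℝ) + ((u + (m+1)).choose (m+2))) :=
        mul_le_mul_of_nonneg_left hN1 hfp.le
      rw [mul_add] at this
      nlinarith
    have := le_of_pow_le_pow_left₀ (n := m+2) (by omega) (by positivity) b6
    linarith
  -- the main estimate
  have hmain : F * (S:ℝ) ≤ ((d:ℝ)+m+1)^(m+1) - (t*(d:ℝ) - ((m:ℝ)+1))^(m+1)
      + F * ((d:ℝ)+m+2)^m := by
    have c1 : F * ((d + m + 1).choose (m+1) : ℝ) ≤ ((d:ℝ)+m+1)^(m+1) := by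
      have := fact_mul_choose_le_pow (d + m + 1) (m+1)
      have := (Nat.cast_le (α := ℝ)).mpr this
      push_cast at this ⊢
      convert this using 2 <;> push_cast <;> ring
    have c2 : ((u:ℝ))^(m+1) ≤ F * ((u + m).choose (m+1) : ℝ) := by
      have := pow_le_fact_mul_choose u (m+1)
      rw [show u + (m+1) - 1 = u + m from by omega] at this
      have := (Nat.cast_le (α := ℝ)).mpr this
      push_cast at this ⊢
      convert this using 2 <;> push_cast <;> ring
    have c3 : F * ((d + m).choose m : ℝ) ≤ F * ((d:ℝ)+m+2)^m := by
      apply mul_le_mul_of_nonneg_left _ hFpos.le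
      have h1 : ((d + m).choose m : ℝ) ≤ ((d:ℝ)+m)^m := by
        have := Nat.choose_le_pow (d+m) m
        have := (Nat.cast_le (α := ℝ)).mpr this
        push_cast at this ⊢
        convert this using 1 <;> push_cast <;> ring
      have h2 : ((d:ℝ)+m)^m ≤ ((d:ℝ)+m+2)^m := pow_le_pow_left₀ (by positivity) (by linarith) _
      linarith
    have c4 : (t*(d:ℝ) - ((m:ℝ)+1))^(m+1) ≤ ((u:ℝ))^(m+1) :=
      pow_le_pow_left₀ (by linarith) hu_lb _
    have c5 : F * ((S:ℝ) + ((u + m).choose (m+1) : ℝ))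
        ≤ F * (((d + m + 1).choose (m+1) : ℝ) + ((d + m).choose m : ℝ)) :=
      mul_le_mul_of_nonneg_left hN2 hFpos.le
    rw [mul_add, mul_add] at c5
    linarith
  -- conclusion via the limit inequality
  have hid : G ((d:ℝ))⁻¹ * (d:ℝ)^(m+1) = ((d:ℝ)+m+1)^(m+1) - (t*(d:ℝ) - ((m:ℝ)+1))^(m+1)
      + F * ((d:ℝ)+m+2)^m := by
    rw [hG]
    have hx : (d:ℝ)⁻¹ * d = 1 := inv_mul_cancel₀ hdne
    have e1 : (1 + ((m:ℝ)+1)*(d:ℝ)⁻¹)*d = d+m+1 := by linear_combination ((m:ℝ)+1)*hx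
    have e2 : (t - ((m:ℝ)+1)*(d:ℝ)⁻¹)*d = t*d-(m+1) := by linear_combination (-((m:ℝ)+1))*hx
    have e3 : (1 + ((m:ℝ)+2)*(d:ℝ)⁻¹)*d = d+m+2 := by linear_combination ((m:ℝ)+2)*hx
    beta_reduce
    rw [← e1, ← e2, ← e3]; simp only [mul_pow]
    linear_combination (F*(1 + ((m:ℝ)+2)*(d:ℝ)⁻¹)^m*(d:ℝ)^m)*hx
  have hfinal : F * (S:ℝ) ≤ (1 - t^(m+1) + δ) * (d:ℝ)^(m+1) := by
    have hdpow : (0:ℝ) < (d:ℝ)^(m+1) := by positivity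
    have := mul_le_mul_of_nonneg_right hd3.le hdpow.le
    rw [hid] at this
    linarith
  rw [← hF, le_div_iff₀ hFpos, mul_comm]
  exact hfinal
end

section
/- The d-decomposition of a positive integer is unique: if c is a positive integer, d is a positive integer, and (r, c_d > c_{d−1} > ⋯ > c_r ≥ r) and (r', c'_d > c'_{d−1} > ⋯ > c'_{r'} ≥ r') are two sequences with 1 ≤ r ≤ d, 1 ≤ r' ≤ d, c = Σ_{i=r}^{d} C(c_i, i) and c = Σ_{i=r'}^{d} C(c'_i, i), then r = r' and c_i = c'_i for all i with r ≤ i ≤ d. -/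
open Filter Finset
open scoped Classical

lemma gap_lemma (d r : ℕ) (f : ℕ → ℕ)
    (hmono : ∀ i, r ≤ i → i < d → f i < f (i + 1)) :
    ∀ i j, r ≤ i → i ≤ j → j ≤ d → f i + (j - i) ≤ f j := by
  intro i j hri hij
  induction j, hij using Nat.le_induction with
  | base => simp
  | succ j hj ih =>
    intro hjd
    have h1 : f j < f (j + 1) := hmono j (hri.trans hj) (by omega)
    have h2 := ih (by omega)
    have : j + 1 - i = (j - i) + 1 := by omega
    omega

lemma sum_lt_choose : ∀ (d m : ℕ), d ≤ m →
    ∑ i ∈ Finset.Icc 1 d, Nat.choose (m - (d - i)) i < Nat.choose (m + 1) d := by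
  intro d
  induction d with
  | zero => intro m _; simp
  | succ n ih =>
    intro m hm
    rw [Finset.sum_Icc_succ_top (by omega : 1 ≤ n + 1)]
    have hterm : ∀ i ∈ Finset.Icc 1 n,
        Nat.choose (m - (n + 1 - i)) i = Nat.choose (m - 1 - (n - i)) i := by
      intro i hi
      simp only [Finset.mem_Icc] at hi
      congr 1
      omega
    rw [Finset.sum_congr rfl hterm]
    have h1 := ih (m - 1) (by omega)
    have h2 : m - 1 + 1 = m := by omega
    rw [h2] at h1
    have h3 : m - (n + 1 - (n + 1)) = m := by omega
    rw [h3]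
    have h4 : Nat.choose (m + 1) (n + 1) = Nat.choose m n + Nat.choose m (n + 1) :=
      Nat.choose_succ_succ' m n
    omega

lemma decomp_lt (d c r : ℕ) (f : ℕ → ℕ) (h : IsDDecomp d c r f) :
    c < Nat.choose (f d + 1) d := by
  obtain ⟨hr1, hrd, hfr, hmono, hsum⟩ := h
  have hgap := gap_lemma d r f hmono
  have hfd : d ≤ f d := by
    have := hgap r d le_rfl hrd le_rfl
    omega
  calc c = ∑ i ∈ Finset.Icc r d, Nat.choose (f i) i := hsum
    _ ≤ ∑ i ∈ Finset.Icc r d, Nat.choose (f d - (d - i)) i := by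
        apply Finset.sum_le_sum
        intro i hi
        simp only [Finset.mem_Icc] at hi
        apply Nat.choose_le_choose
        have := hgap i d hi.1 hi.2 le_rfl
        omega
    _ ≤ ∑ i ∈ Finset.Icc 1 d, Nat.choose (f d - (d - i)) i := by
        apply Finset.sum_le_sum_of_subset
        apply Finset.Icc_subset_Icc_left hr1
    _ < Nat.choose (f d + 1) d := sum_lt_choose d (f d) hfd

lemma top_eq (d c r r' : ℕ) (f f' : ℕ → ℕ)
    (h : IsDDecomp d c r f) (h' : IsDDecomp d c r' f') : f d = f' d := by
  have hub := decomp_lt d c r f h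
  have hub' := decomp_lt d c r' f' h'
  have hlb : Nat.choose (f d) d ≤ c := by
    obtain ⟨_, hrd, _, _, hsum⟩ := h
    rw [hsum]
    exact Finset.single_le_sum (f := fun i => Nat.choose (f i) i)
      (fun i _ => Nat.zero_le _) (by simp [hrd])
  have hlb' : Nat.choose (f' d) d ≤ c := by
    obtain ⟨_, hrd, _, _, hsum⟩ := h'
    rw [hsum]
    exact Finset.single_le_sum (f := fun i => Nat.choose (f' i) i)
      (fun i _ => Nat.zero_le _) (by simp [hrd])
  by_contra hne
  rcases Nat.lt_or_ge (f d) (f' d) with hlt | hge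
  · have : Nat.choose (f d + 1) d ≤ Nat.choose (f' d) d := Nat.choose_le_choose d hlt
    omega
  · have hlt' : f' d < f d := lt_of_le_of_ne hge (Ne.symm hne)
    have : Nat.choose (f' d + 1) d ≤ Nat.choose (f d) d := Nat.choose_le_choose d (by omega)
    omega

lemma main_aux : ∀ d c r r' : ℕ, ∀ f f' : ℕ → ℕ, 0 < d →
    IsDDecomp d c r f → IsDDecomp d c r' f' →
    r = r' ∧ ∀ i, r ≤ i → i ≤ d → f i = f' i := by
  intro d
  induction d with
  | zero => intro _ _ _ _ _ h; omega
  | succ n ih =>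
    intro c r r' f f' _ h h'
    have htop : f (n + 1) = f' (n + 1) := top_eq _ c r r' f f' h h'
    obtain ⟨hr1, hrd, hfr, hmono, hsum⟩ := h
    obtain ⟨hr1', hrd', hfr', hmono', hsum'⟩ := h'
    have hsplit : c = (∑ i ∈ Finset.Icc r n, Nat.choose (f i) i) + Nat.choose (f (n+1)) (n+1) := by
      rw [hsum, Finset.sum_Icc_succ_top hrd]
    have hsplit' : c = (∑ i ∈ Finset.Icc r' n, Nat.choose (f' i) i) + Nat.choose (f' (n+1)) (n+1) := by
      rw [hsum', Finset.sum_Icc_succ_top hrd']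
    have hc0 : (∑ i ∈ Finset.Icc r n, Nat.choose (f i) i)
        = (∑ i ∈ Finset.Icc r' n, Nat.choose (f' i) i) := by
      rw [htop] at hsplit; omega
    rcases Nat.lt_or_ge r (n + 1) with hrn | hrn
    · rcases Nat.lt_or_ge r' (n + 1) with hrn' | hrn'
      · -- both ≤ n : use IH
        have hdec : IsDDecomp n (∑ i ∈ Finset.Icc r n, Nat.choose (f i) i) r f :=
          ⟨hr1, by omega, hfr, fun i h1 h2 => hmono i h1 (by omega), rfl⟩
        have hdec' : IsDDecomp n (∑ i ∈ Finset.Icc r n, Nat.choose (f i) i) r' f' := by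
          refine ⟨hr1', by omega, hfr', fun i h1 h2 => hmono' i h1 (by omega), ?_⟩
          rw [hc0]
        obtain ⟨hreq, hfeq⟩ := ih _ _ _ _ _ (by omega) hdec hdec'
        refine ⟨hreq, fun i h1 h2 => ?_⟩
        rcases Nat.lt_or_ge i (n + 1) with hi | hi
        · exact hfeq i h1 (by omega)
        · have : i = n + 1 := by omega
          rw [this, htop]
      · -- r ≤ n, r' = n+1 : contradiction
        exfalso
        have hr'eq : r' = n + 1 := by omega
        have hempty : Finset.Icc r' n = ∅ := by
          rw [Finset.Icc_eq_empty]; omega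
        rw [hempty, Finset.sum_empty] at hc0
        have hpos : 0 < Nat.choose (f r) r := Nat.choose_pos hfr
        have : Nat.choose (f r) r ≤ ∑ i ∈ Finset.Icc r n, Nat.choose (f i) i :=
          Finset.single_le_sum (f := fun i => Nat.choose (f i) i)
            (fun i _ => Nat.zero_le _) (by simp; omega)
        omega
    · rcases Nat.lt_or_ge r' (n + 1) with hrn' | hrn'
      · exfalso
        have hempty : Finset.Icc r n = ∅ := by
          rw [Finset.Icc_eq_empty]; omega
        rw [hempty, Finset.sum_empty] at hc0
        have hpos : 0 < Nat.choose (f' r') r' := Nat.choose_pos hfr'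
        have : Nat.choose (f' r') r' ≤ ∑ i ∈ Finset.Icc r' n, Nat.choose (f' i) i :=
          Finset.single_le_sum (f := fun i => Nat.choose (f' i) i)
            (fun i _ => Nat.zero_le _) (by simp; omega)
        omega
      · have : r = n + 1 := by omega
        have : r' = n + 1 := by omega
        refine ⟨by omega, fun i h1 h2 => ?_⟩
        have : i = n + 1 := by omega
        rw [this, htop]

theorem stmt3 (c d r r' : ℕ) (f f' : ℕ → ℕ) (hc : 0 < c) (hd : 0 < d)
    (h : IsDDecomp d c r f) (h' : IsDDecomp d c r' f') :
    r = r' ∧ ∀ i, r ≤ i → i ≤ d → f i = f' i :=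
  main_aux d c r r' f f' hd h h'
end

section
/- Let M ≥ 1 and 0 ≤ e < d be integers, and set c = C(M+d, d) − C(M+e, e). Then the sequence (c_j)_{j=e+1}^{d} defined by c_j = M + j − 1 is the d-decomposition of c, i.e., it satisfies c_d > c_{d−1} > ⋯ > c_{e+1} ≥ e+1 and c = Σ_{j=e+1}^{d} C(c_j, j); moreover the associated lowering satisfies c_{<d>} = Σ_{j=e+1}^{d} C(c_j − 1, j) = C(M−1+d, d) − C(M−1+e, e). -/
open Filter Finset
open scoped Classical

/-- Hockey-stick identity. -/
lemma hockey_s5 (N e : ℕ) : ∀ d, e ≤ d →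
    Nat.choose (N + e) e + ∑ j ∈ Finset.Icc (e + 1) d, Nat.choose (N + j - 1) j
      = Nat.choose (N + d) d := by
  intro d
  induction d with
  | zero => intro h; interval_cases e; simp
  | succ d ih =>
    intro h
    rcases Nat.lt_or_ge d e with h1 | h1
    · have he : e = d + 1 := by omega
      subst he
      simp
    · rw [Finset.sum_Icc_succ_top (by omega : e + 1 ≤ d + 1), ← Nat.add_assoc, ih h1]
      have h2 : N + (d + 1) - 1 = N + d := by omega
      rw [h2]
      have h4 : N + (d + 1) = N + d + 1 := by omega
      rw [h4]
      have := Nat.choose_succ_succ' (N + d) d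
      omega

lemma f_ge (d r : ℕ) (f : ℕ → ℕ) (h3 : r ≤ f r)
    (h4 : ∀ i, r ≤ i → i < d → f i < f (i + 1)) :
    ∀ i, r ≤ i → i ≤ d → i ≤ f i := by
  have key : ∀ k, r + k ≤ d → r + k ≤ f (r + k) := by
    intro k
    induction k with
    | zero => intro _; simpa using h3
    | succ k ih =>
      intro h
      have h1 := ih (by omega)
      have h2 := h4 (r + k) (by omega) (by omega)
      show r + k + 1 ≤ f (r + k + 1)
      omega
  intro i hri hid
  have := key (i - r) (by omega)
  have hh : r + (i - r) = i := by omega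
  rw [hh] at this
  exact this

lemma sum_choose_lt (d : ℕ) : ∀ (r : ℕ) (f : ℕ → ℕ), 1 ≤ r → r ≤ d → r ≤ f r →
    (∀ i, r ≤ i → i < d → f i < f (i + 1)) →
    ∑ i ∈ Finset.Icc r d, Nat.choose (f i) i < Nat.choose (f d + 1) d := by
  induction d with
  | zero => intro r f h1 h2 _ _; omega
  | succ d ih =>
    intro r f h1 h2 h3 h4
    have hfd : d + 1 ≤ f (d + 1) := f_ge (d+1) r f h3 h4 (d+1) h2 le_rfl
    have hpasc := Nat.choose_succ_succ' (f (d + 1)) d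
    have hpos : 0 < Nat.choose (f (d + 1)) d := Nat.choose_pos (by omega)
    rcases eq_or_lt_of_le h2 with hr | hr
    · rw [← hr, Finset.Icc_self, Finset.sum_singleton, hr]
      omega
    · have hrd : r ≤ d := by omega
      rw [Finset.sum_Icc_succ_top (by omega : r ≤ d + 1)]
      have hih := ih r f h1 hrd h3 (fun i hi hi' => h4 i hi (by omega))
      have hmono : f d < f (d + 1) := h4 d hrd (by omega)
      have h5 : Nat.choose (f d + 1) d ≤ Nat.choose (f (d + 1)) d :=
        Nat.choose_le_choose d (by omega)
      omega

/-- Uniqueness of the `d`-decomposition. -/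
lemma decomp_unique (d : ℕ) : ∀ (c r : ℕ) (f : ℕ → ℕ) (s : ℕ) (g : ℕ → ℕ),
    IsDDecomp d c r f → IsDDecomp d c s g →
    r = s ∧ ∀ i ∈ Finset.Icc r d, f i = g i := by
  induction d with
  | zero => intro c r f s g hf _; obtain ⟨h1, h2, _⟩ := hf; omega
  | succ d ih =>
    intro c r f s g hf hg
    obtain ⟨hf1, hf2, hf3, hf4, hf5⟩ := hf
    obtain ⟨hg1, hg2, hg3, hg4, hg5⟩ := hg
    have hub_f : c < Nat.choose (f (d + 1) + 1) (d + 1) := by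
      rw [hf5]; exact sum_choose_lt (d + 1) r f hf1 hf2 hf3 hf4
    have hub_g : c < Nat.choose (g (d + 1) + 1) (d + 1) := by
      rw [hg5]; exact sum_choose_lt (d + 1) s g hg1 hg2 hg3 hg4
    have hlb_f : Nat.choose (f (d + 1)) (d + 1) ≤ c := by
      rw [hf5]
      exact Finset.single_le_sum (f := fun i => Nat.choose (f i) i)
        (fun i _ => Nat.zero_le _) (Finset.mem_Icc.mpr ⟨hf2, le_rfl⟩)
    have hlb_g : Nat.choose (g (d + 1)) (d + 1) ≤ c := by
      rw [hg5]
      exact Finset.single_le_sum (f := fun i => Nat.choose (g i) i)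
        (fun i _ => Nat.zero_le _) (Finset.mem_Icc.mpr ⟨hg2, le_rfl⟩)
    have htop : f (d + 1) = g (d + 1) := by
      by_contra hne
      rcases Nat.lt_or_ge (f (d + 1)) (g (d + 1)) with h | h
      · have := Nat.choose_le_choose (d + 1) (by omega : f (d + 1) + 1 ≤ g (d + 1))
        omega
      · have := Nat.choose_le_choose (d + 1) (by omega : g (d + 1) + 1 ≤ f (d + 1))
        omega
    by_cases hrd : r ≤ d
    · rw [Finset.sum_Icc_succ_top (by omega : r ≤ d + 1), htop] at hf5
      have hfpos : 0 < Nat.choose (f r) r := Nat.choose_pos hf3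
      have hfr : Nat.choose (f r) r ≤ ∑ i ∈ Finset.Icc r d, Nat.choose (f i) i :=
        Finset.single_le_sum (f := fun i => Nat.choose (f i) i)
          (fun i _ => Nat.zero_le _) (Finset.mem_Icc.mpr ⟨le_rfl, hrd⟩)
      by_cases hsd : s ≤ d
      · rw [Finset.sum_Icc_succ_top (by omega : s ≤ d + 1)] at hg5
        have hsum : ∑ i ∈ Finset.Icc r d, Nat.choose (f i) i
            = ∑ i ∈ Finset.Icc s d, Nat.choose (g i) i := by omega
        have hftail : IsDDecomp d (∑ i ∈ Finset.Icc r d, Nat.choose (f i) i) r f :=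
          ⟨hf1, hrd, hf3, fun i hi hi' => hf4 i hi (by omega), rfl⟩
        have hgtail : IsDDecomp d (∑ i ∈ Finset.Icc r d, Nat.choose (f i) i) s g :=
          ⟨hg1, hsd, hg3, fun i hi hi' => hg4 i hi (by omega), hsum⟩
        obtain ⟨hrs, hvals⟩ := ih _ r f s g hftail hgtail
        refine ⟨hrs, fun i hi => ?_⟩
        rw [Finset.mem_Icc] at hi
        rcases Nat.lt_or_ge i (d + 1) with h | h
        · exact hvals i (Finset.mem_Icc.mpr ⟨hi.1, by omega⟩)
        · have hh : i = d + 1 := by omega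
          rw [hh]; exact htop
      · exfalso
        have hs : s = d + 1 := by omega
        rw [hs, Finset.Icc_self, Finset.sum_singleton] at hg5
        omega
    · have hr : r = d + 1 := by omega
      rw [hr, Finset.Icc_self, Finset.sum_singleton, htop] at hf5
      by_cases hsd : s ≤ d
      · exfalso
        rw [Finset.sum_Icc_succ_top (by omega : s ≤ d + 1)] at hg5
        have hgpos : 0 < Nat.choose (g s) s := Nat.choose_pos hg3
        have hgs : Nat.choose (g s) s ≤ ∑ i ∈ Finset.Icc s d, Nat.choose (g i) i :=
          Finset.single_le_sum (f := fun i => Nat.choose (g i) i)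
            (fun i _ => Nat.zero_le _) (Finset.mem_Icc.mpr ⟨le_rfl, hsd⟩)
        omega
      · refine ⟨by omega, fun i hi => ?_⟩
        rw [Finset.mem_Icc] at hi
        have hh : i = d + 1 := by omega
        rw [hh]; exact htop

theorem stmt5 (M e d : ℕ) (hM : 1 ≤ M) (hed : e < d) :
    IsDDecomp d (Nat.choose (M + d) d - Nat.choose (M + e) e) (e + 1) (fun j => M + j - 1) ∧
    lowerD d (Nat.choose (M + d) d - Nat.choose (M + e) e) =
      ∑ j ∈ Finset.Icc (e + 1) d, Nat.choose (M + j - 1 - 1) j ∧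
    ∑ j ∈ Finset.Icc (e + 1) d, Nat.choose (M + j - 1 - 1) j =
      Nat.choose (M - 1 + d) d - Nat.choose (M - 1 + e) e := by
  have hk := hockey_s5 M e d (le_of_lt hed)
  have hle : Nat.choose (M + e) e ≤ Nat.choose (M + d) d := by omega
  have hdec : IsDDecomp d (Nat.choose (M + d) d - Nat.choose (M + e) e) (e + 1)
      (fun j => M + j - 1) := by
    refine ⟨by omega, hed, ?_, ?_, ?_⟩
    · show e + 1 ≤ M + (e + 1) - 1
      omega
    · intro i hi hid
      show M + i - 1 < M + (i + 1) - 1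
      omega
    · show Nat.choose (M + d) d - Nat.choose (M + e) e
        = ∑ i ∈ Finset.Icc (e + 1) d, Nat.choose (M + i - 1) i
      omega
  refine ⟨hdec, ?_, ?_⟩
  · have hex : ∃ p : ℕ × (ℕ → ℕ),
        IsDDecomp d (Nat.choose (M + d) d - Nat.choose (M + e) e) p.1 p.2 :=
      ⟨⟨e + 1, fun j => M + j - 1⟩, hdec⟩
    rw [lowerD, dif_pos hex]
    obtain ⟨hr, hv⟩ := decomp_unique d _ _ _ _ _ hex.choose_spec hdec
    rw [hr] at hv ⊢
    refine Finset.sum_congr rfl fun i hi => ?_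
    rw [hv i hi]
  · have hk' := hockey_s5 (M - 1) e d (le_of_lt hed)
    have hs : ∑ j ∈ Finset.Icc (e + 1) d, Nat.choose (M + j - 1 - 1) j
        = ∑ j ∈ Finset.Icc (e + 1) d, Nat.choose (M - 1 + j - 1) j := by
      refine Finset.sum_congr rfl fun j hj => ?_
      rw [Finset.mem_Icc] at hj
      congr 1
      omega
    omega
end

section
/- Let M ≥ 1 and 0 ≤ e < d be integers, and let c be a nonnegative integer with c ≤ C(M+d, d) − C(M+e, e). Then c_{<d>} ≤ C(M−1+d, d) − C(M−1+e, e). -/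
open Filter Finset
open scoped Classical

lemma chainLe (d r : ℕ) (f : ℕ → ℕ) (hf : ∀ i, r ≤ i → i < d → f i < f (i + 1)) :
    ∀ i j, r ≤ i → i ≤ j → j ≤ d → f i + (j - i) ≤ f j := by
  intro i j hri hij hjd
  induction j, hij using Nat.le_induction with
  | base => simp
  | succ j hj ih =>
    have h1 := hf j (le_trans hri hj) (by omega)
    have h2 := ih (by omega)
    omega

lemma tele (N e : ℕ) : ∀ d, e ≤ d →
    (∑ i ∈ Icc (e+1) d, Nat.choose (N + i) i) + Nat.choose (N+1+e) e
      = Nat.choose (N+1+d) d := by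
  intro d hd
  induction d, hd using Nat.le_induction with
  | base => simp
  | succ d hd ih =>
    rw [Finset.sum_Icc_succ_top (by omega : e + 1 ≤ d + 1)]
    have h1 : N + 1 + (d + 1) = (N + 1 + d) + 1 := by ring
    rw [h1, Nat.choose_succ_succ]
    have h2 : N + (d + 1) = N + 1 + d := by ring
    rw [h2]
    linarith [ih]

lemma monoChoose (N : ℕ) : ∀ e d : ℕ, e ≤ d → Nat.choose (N + e) e ≤ Nat.choose (N + d) d := by
  intro e d hd
  induction d, hd using Nat.le_induction with
  | base => exact le_refl _
  | succ d hd ih =>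
    have h1 : N + (d + 1) = (N + d) + 1 := by ring
    rw [h1, Nat.choose_succ_succ]
    omega

lemma sumlow : ∀ (d n : ℕ), (∑ i ∈ Icc 1 d, Nat.choose (n - (d - i)) i) ≤ Nat.choose (n+1) d := by
  intro d
  induction d with
  | zero => intro n; simp
  | succ d ih =>
    intro n
    rcases Nat.eq_zero_or_pos n with hn | hn
    · subst hn
      have hz : (∑ i ∈ Icc 1 (d+1), Nat.choose (0 - (d + 1 - i)) i) = 0 := by
        apply Finset.sum_eq_zero
        intro i hi
        simp only [Finset.mem_Icc] at hi
        rw [Nat.zero_sub]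
        exact Nat.choose_eq_zero_of_lt (by omega)
      rw [hz]
      exact Nat.zero_le _
    rw [Finset.sum_Icc_succ_top (by omega : 1 ≤ d + 1)]
    have heq : ∀ i ∈ Icc 1 d, Nat.choose (n - (d + 1 - i)) i = Nat.choose ((n-1) - (d - i)) i := by
      intro i hi
      simp only [Finset.mem_Icc] at hi
      congr 1
      omega
    rw [Finset.sum_congr rfl heq]
    have hih := ih (n - 1)
    have h1 : n - 1 + 1 = n := by omega
    rw [h1] at hih
    have h2 : Nat.choose (n+1) (d+1) = Nat.choose n d + Nat.choose n (d+1) := Nat.choose_succ_succ n d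
    have h3 : n - (d + 1 - (d + 1)) = n := by omega
    rw [h3]
    omega

lemma sumlow' : ∀ (d n : ℕ), 1 ≤ d → d ≤ n →
    (∑ i ∈ Icc 1 d, Nat.choose (n - (d - i)) i) + 1 ≤ Nat.choose (n+1) d := by
  intro d
  induction d with
  | zero => intro n h; omega
  | succ d ih =>
    intro n _ hdn
    rcases Nat.eq_zero_or_pos d with hd | hd
    · subst hd
      simp only [Finset.Icc_self, Finset.sum_singleton]
      have h3 : n - (0 + 1 - 1) = n := by omega
      rw [h3, Nat.choose_one_right, Nat.choose_one_right]
    · rw [Finset.sum_Icc_succ_top (by omega : 1 ≤ d + 1)]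
      have heq : ∀ i ∈ Icc 1 d, Nat.choose (n - (d + 1 - i)) i = Nat.choose ((n-1) - (d - i)) i := by
        intro i hi
        simp only [Finset.mem_Icc] at hi
        congr 1
        omega
      rw [Finset.sum_congr rfl heq]
      have hih := ih (n - 1) hd (by omega)
      have h1 : n - 1 + 1 = n := by omega
      rw [h1] at hih
      have h2 : Nat.choose (n+1) (d+1) = Nat.choose n d + Nat.choose n (d+1) := Nat.choose_succ_succ n d
      have h3 : n - (d + 1 - (d + 1)) = n := by omega
      rw [h3]
      omega

lemma mainL : ∀ d r s : ℕ, ∀ f g : ℕ → ℕ,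
    1 ≤ r → r ≤ d → r ≤ f r → (∀ i, r ≤ i → i < d → f i < f (i + 1)) →
    1 ≤ s → s ≤ d → s ≤ g s → (∀ i, s ≤ i → i < d → g i < g (i + 1)) →
    (∑ i ∈ Icc r d, Nat.choose (f i) i) ≤ (∑ i ∈ Icc s d, Nat.choose (g i) i) →
    (∑ i ∈ Icc r d, Nat.choose (f i - 1) i) ≤ ∑ i ∈ Icc s d, Nat.choose (g i - 1) i := by
  intro d
  induction d with
  | zero => intro r s f g hr1 hrd; omega
  | succ d ih =>
    intro r s f g hr1 hrd hfr hf hs1 hsd hgs hg hle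
    -- chain facts
    have hfch : ∀ i, r ≤ i → i ≤ d + 1 → f i + (d + 1 - i) ≤ f (d+1) :=
      fun i h1 h2 => chainLe (d+1) r f hf i (d+1) h1 h2 le_rfl
    have hfge : ∀ i, r ≤ i → i ≤ d + 1 → i ≤ f i := by
      intro i h1 h2
      have := chainLe (d+1) r f hf r i le_rfl h1 h2
      omega
    have hgch : ∀ i, s ≤ i → i ≤ d + 1 → g i + (d + 1 - i) ≤ g (d+1) :=
      fun i h1 h2 => chainLe (d+1) s g hg i (d+1) h1 h2 le_rfl
    have hgge : ∀ i, s ≤ i → i ≤ d + 1 → i ≤ g i := by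
      intro i h1 h2
      have := chainLe (d+1) s g hg s i le_rfl h1 h2
      omega
    have hfD : d + 1 ≤ f (d+1) := hfge (d+1) (by omega) le_rfl
    have hgD : d + 1 ≤ g (d+1) := hgge (d+1) (by omega) le_rfl
    have hDmem : d + 1 ∈ Icc s (d+1) := by simp [Finset.mem_Icc]; omega
    have hRtop : Nat.choose (g (d+1) - 1) (d+1) ≤ ∑ i ∈ Icc s (d+1), Nat.choose (g i - 1) i :=
      Finset.single_le_sum (f := fun i => Nat.choose (g i - 1) i) (fun i _ => Nat.zero_le _) hDmem
    rcases lt_trichotomy (f (d+1)) (g (d+1)) with hlt | heq | hgt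
    · -- case A : f(d+1) < g(d+1)
      have step1 : (∑ i ∈ Icc r (d+1), Nat.choose (f i - 1) i)
          ≤ ∑ i ∈ Icc 1 (d+1), Nat.choose ((g (d+1) - 2) - (d + 1 - i)) i := by
        calc (∑ i ∈ Icc r (d+1), Nat.choose (f i - 1) i)
            ≤ ∑ i ∈ Icc r (d+1), Nat.choose ((g (d+1) - 2) - (d + 1 - i)) i := by
              apply Finset.sum_le_sum
              intro i hi
              simp only [Finset.mem_Icc] at hi
              apply Nat.choose_le_choose
              have h1 := hfch i hi.1 hi.2
              have h2 := hfge i hi.1 hi.2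
              omega
          _ ≤ ∑ i ∈ Icc 1 (d+1), Nat.choose ((g (d+1) - 2) - (d + 1 - i)) i := by
              apply Finset.sum_le_sum_of_subset
              exact Finset.Icc_subset_Icc (by omega) le_rfl
      have step2 : (∑ i ∈ Icc 1 (d+1), Nat.choose ((g (d+1) - 2) - (d + 1 - i)) i)
          ≤ Nat.choose (g (d+1) - 1) (d+1) := by
        have := sumlow (d+1) (g (d+1) - 2)
        have h1 : g (d+1) - 2 + 1 = g (d+1) - 1 := by omega
        rwa [h1] at this
      exact le_trans (le_trans step1 step2) hRtop
    · -- case B : f(d+1) = g(d+1)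
      by_cases hrD : r = d + 1
      · subst hrD
        rw [Finset.Icc_self, Finset.sum_singleton, heq]
        exact hRtop
      · have hrd' : r ≤ d := by omega
        by_cases hsD : s = d + 1
        · exfalso
          subst hsD
          rw [Finset.Icc_self, Finset.sum_singleton] at hle
          rw [Finset.sum_Icc_succ_top (by omega : r ≤ d + 1)] at hle
          have hmem : d ∈ Icc r d := by simp [Finset.mem_Icc]; omega
          have h1 : Nat.choose (f d) d ≤ ∑ i ∈ Icc r d, Nat.choose (f i) i :=
            Finset.single_le_sum (f := fun i => Nat.choose (f i) i) (fun i _ => Nat.zero_le _) hmem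
          have h2 : 1 ≤ Nat.choose (f d) d := by
            have := Nat.choose_le_choose d (hfge d hrd' (by omega))
            rw [Nat.choose_self] at this
            omega
          rw [heq] at hle
          omega
        · have hsd' : s ≤ d := by omega
          rw [Finset.sum_Icc_succ_top (by omega : r ≤ d + 1),
              Finset.sum_Icc_succ_top (by omega : s ≤ d + 1)] at hle
          have hle' : (∑ i ∈ Icc r d, Nat.choose (f i) i) ≤ ∑ i ∈ Icc s d, Nat.choose (g i) i := by
            rw [heq] at hle
            omega
          have ihres := ih r s f g hr1 hrd' hfr (fun i h1 h2 => hf i h1 (by omega))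
            hs1 hsd' hgs (fun i h1 h2 => hg i h1 (by omega)) hle'
          rw [Finset.sum_Icc_succ_top (by omega : r ≤ d + 1),
              Finset.sum_Icc_succ_top (by omega : s ≤ d + 1), heq]
          omega
    · -- case C : g(d+1) < f(d+1) : contradiction
      exfalso
      have hR1 : (∑ i ∈ Icc s (d+1), Nat.choose (g i) i)
          ≤ ∑ i ∈ Icc 1 (d+1), Nat.choose (g (d+1) - (d + 1 - i)) i := by
        calc (∑ i ∈ Icc s (d+1), Nat.choose (g i) i)
            ≤ ∑ i ∈ Icc s (d+1), Nat.choose (g (d+1) - (d + 1 - i)) i := by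
              apply Finset.sum_le_sum
              intro i hi
              simp only [Finset.mem_Icc] at hi
              apply Nat.choose_le_choose
              have := hgch i hi.1 hi.2
              omega
          _ ≤ ∑ i ∈ Icc 1 (d+1), Nat.choose (g (d+1) - (d + 1 - i)) i := by
              apply Finset.sum_le_sum_of_subset
              exact Finset.Icc_subset_Icc (by omega) le_rfl
      have hR2 := sumlow' (d+1) (g (d+1)) (by omega) hgD
      have hL1 : Nat.choose (g (d+1) + 1) (d+1) ≤ Nat.choose (f (d+1)) (d+1) :=
        Nat.choose_le_choose (d+1) (by omega)
      have hL2 : Nat.choose (f (d+1)) (d+1) ≤ ∑ i ∈ Icc r (d+1), Nat.choose (f i) i :=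
        Finset.single_le_sum (f := fun i => Nat.choose (f i) i) (fun i _ => Nat.zero_le _) (Finset.mem_Icc.mpr (by omega))
      omega

theorem stmt7 (M e d c : ℕ) (hM : 1 ≤ M) (hed : e < d)
    (hc : (c : ℤ) ≤ (Nat.choose (M + d) d : ℤ) - (Nat.choose (M + e) e : ℤ)) :
    (lowerD d c : ℤ) ≤ (Nat.choose (M - 1 + d) d : ℤ) - (Nat.choose (M - 1 + e) e : ℤ) := by
  have hmono : Nat.choose (M - 1 + e) e ≤ Nat.choose (M - 1 + d) d :=
    monoChoose (M - 1) e d (le_of_lt hed)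
  unfold lowerD
  split_ifs with h
  · obtain ⟨hr1, hrd, hfr, hf, hsum⟩ := h.choose_spec
    set r := h.choose.1
    set f := h.choose.2
    -- hypothesis in ℕ
    have hcn : c + Nat.choose (M + e) e ≤ Nat.choose (M + d) d := by
      have : (c : ℤ) + (Nat.choose (M + e) e : ℤ) ≤ (Nat.choose (M + d) d : ℤ) := by linarith
      exact_mod_cast this
    have htel := tele (M - 1) e d (le_of_lt hed)
    rw [show M - 1 + 1 + e = M + e from by omega, show M - 1 + 1 + d = M + d from by omega] at htel
    have hcle : c ≤ ∑ i ∈ Icc (e+1) d, Nat.choose (M - 1 + i) i := by omega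
    have hkey : (∑ i ∈ Icc r d, Nat.choose (f i - 1) i)
        ≤ ∑ i ∈ Icc (e+1) d, Nat.choose (M - 1 + i - 1) i :=
      mainL d r (e+1) f (fun i => M - 1 + i) hr1 hrd hfr hf
        (by omega) (by omega) (show e + 1 ≤ M - 1 + (e + 1) by omega)
        (fun i _ _ => show M - 1 + i < M - 1 + (i + 1) by omega)
        (by rw [← hsum]; exact hcle)
    -- bound the target sum
    have htarget : (∑ i ∈ Icc (e+1) d, Nat.choose (M - 1 + i - 1) i) + Nat.choose (M - 1 + e) e
        ≤ Nat.choose (M - 1 + d) d := by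
      rcases Nat.eq_zero_or_pos (M - 1) with hM1 | hM1
      · have hz : (∑ i ∈ Icc (e+1) d, Nat.choose (M - 1 + i - 1) i) = 0 := by
          apply Finset.sum_eq_zero
          intro i hi
          simp only [Finset.mem_Icc] at hi
          exact Nat.choose_eq_zero_of_lt (by omega)
        rw [hz, hM1]
        simp [Nat.choose_self]
      · have htel2 := tele (M - 2) e d (le_of_lt hed)
        rw [show M - 2 + 1 + e = M - 1 + e from by omega,
            show M - 2 + 1 + d = M - 1 + d from by omega] at htel2
        have heq2 : ∀ i ∈ Icc (e+1) d, Nat.choose (M - 1 + i - 1) i = Nat.choose (M - 2 + i) i := by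
          intro i hi
          congr 1
          omega
        rw [Finset.sum_congr rfl heq2]
        omega
    have hfinal : (∑ i ∈ Icc r d, Nat.choose (f i - 1) i) + Nat.choose (M - 1 + e) e
        ≤ Nat.choose (M - 1 + d) d := le_trans (by omega) htarget
    have := hfinal
    push_cast at this ⊢
    linarith
  · have : (0:ℤ) ≤ (Nat.choose (M - 1 + d) d : ℤ) - (Nat.choose (M - 1 + e) e : ℤ) := by
      have := hmono
      push_cast
      omega
    simpa using this
end

section
/- Let M ≥ 1 be an integer, let α ∈ [0,1] be a real number, and let e : ℕ → ℕ be a function with e(d) ≤ d for all d and such that e(d)/d → α as d → ∞. Then the real sequence d ↦ (C(M+d, d) − C(M+e(d), e(d))) · M! / d^M converges to 1 − α^M as d → ∞. -/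
open Filter Finset

lemma asc_prod (n k : ℕ) : n.ascFactorial k = ∏ i ∈ range k, (n + i) := by
  induction k with
  | zero => simp
  | succ k ih => rw [Nat.ascFactorial_succ, prod_range_succ, ih, mul_comm]

lemma choose_mul_fact (n k : ℕ) :
    ((n + k).choose k : ℝ) * (Nat.factorial k : ℝ) = ∏ i ∈ range k, ((n : ℝ) + i + 1) := by
  have h := Nat.ascFactorial_eq_factorial_mul_choose n k
  rw [asc_prod] at h
  have : ((∏ i ∈ range k, (n + 1 + i) : ℕ) : ℝ) = ((Nat.factorial k * (n + k).choose k : ℕ) : ℝ) := by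
    rw [h]
  push_cast at this
  rw [mul_comm] at this
  rw [← this]
  exact prod_congr rfl fun i _ => by ring

theorem stmt9 (M : ℕ) (hM : 1 ≤ M) (α : ℝ) (hα : α ∈ Set.Icc (0:ℝ) 1)
    (e : ℕ → ℕ) (he : ∀ d : ℕ, e d ≤ d)
    (hlim : Tendsto (fun d : ℕ => (e d : ℝ) / (d : ℝ)) atTop (nhds α)) :
    Tendsto (fun d : ℕ =>
        ((Nat.choose (M + d) d : ℝ) - (Nat.choose (M + e d) (e d) : ℝ)) *
          (Nat.factorial M : ℝ) / (d : ℝ) ^ M)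
      atTop (nhds (1 - α ^ M)) := by
  have key : ∀ᶠ d : ℕ in atTop, ((Nat.choose (M + d) d : ℝ) - (Nat.choose (M + e d) (e d) : ℝ)) *
          (Nat.factorial M : ℝ) / (d : ℝ) ^ M
        = (∏ i ∈ range M, (((d:ℝ) + i + 1) / d)) - ∏ i ∈ range M, (((e d : ℝ) + i + 1) / d) := by
    filter_upwards [eventually_ge_atTop 1] with d hd
    have hd0 : (d : ℝ) ≠ 0 := by positivity
    have h1 : ((M + d).choose d : ℝ) * (Nat.factorial M : ℝ)
        = ∏ i ∈ range M, ((d : ℝ) + i + 1) := by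
      have : (M + d).choose d = (d + M).choose M := by
        rw [Nat.add_comm]; exact Nat.choose_symm_add
      rw [this]; exact choose_mul_fact d M
    have h2 : ((M + e d).choose (e d) : ℝ) * (Nat.factorial M : ℝ)
        = ∏ i ∈ range M, ((e d : ℝ) + i + 1) := by
      have : (M + e d).choose (e d) = (e d + M).choose M := by
        rw [Nat.add_comm]; exact Nat.choose_symm_add
      rw [this]; exact choose_mul_fact (e d) M
    rw [sub_mul, h1, h2, prod_div_distrib, prod_div_distrib, prod_const, sub_div, card_range]
  rw [Filter.tendsto_congr' key]
  have lim1 : Tendsto (fun d : ℕ => ∏ i ∈ range M, (((d:ℝ) + i + 1) / d)) atTop (nhds 1) := by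
    have : (1 : ℝ) = ∏ _i ∈ range M, (1 : ℝ) := by simp
    rw [this]
    apply tendsto_finset_prod
    intro i _
    have : Tendsto (fun d : ℕ => 1 + ((i : ℝ) + 1) / d) atTop (nhds (1 + 0)) := by
      apply tendsto_const_nhds.add
      exact Tendsto.div_atTop tendsto_const_nhds tendsto_natCast_atTop_atTop
    rw [add_zero] at this
    apply this.congr'
    filter_upwards [eventually_ge_atTop 1] with d hd
    have hd0 : (d : ℝ) ≠ 0 := by positivity
    field_simp
    rw [prod_const_one]; ring
  have lim2 : Tendsto (fun d : ℕ => ∏ i ∈ range M, (((e d : ℝ) + i + 1) / d)) atTop (nhds (α ^ M)) := by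
    have : (α ^ M : ℝ) = ∏ _i ∈ range M, α := by simp
    rw [this]
    apply tendsto_finset_prod
    intro i _
    have h2 : Tendsto (fun d : ℕ => (e d : ℝ) / d + ((i : ℝ) + 1) / d) atTop (nhds (α + 0)) := by
      apply hlim.add
      exact Tendsto.div_atTop tendsto_const_nhds tendsto_natCast_atTop_atTop
    rw [add_zero] at h2
    apply h2.congr'
    filter_upwards [eventually_ge_atTop 1] with d hd
    have hd0 : (d : ℝ) ≠ 0 := by positivity
    field_simp
    ring
  exact lim1.sub lim2
end

section
/- Fix an integer M ≥ 1 and a real number ε ∈ (0,1). For each positive integer d, the set S(d) = { e ∈ ℕ : 1 ≤ e ≤ d and (1 − ε)·d^M / M! ≤ C(M+d, d) − C(M+e, e) } is nonempty for all sufficiently large d; letting e(d) denote the largest element of S(d) (and e(d) = 0 when S(d) is empty), one has e(d)/d → ε^{1/M} as d → ∞. -/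
open Filter Finset

/-- `Sset M ε d` is the set of natural numbers `e` with `1 ≤ e ≤ d` and
`(1 - ε)·d^M / M! ≤ C(M+d, d) - C(M+e, e)`. -/
def Sset (M : ℕ) (ε : ℝ) (d : ℕ) : Set ℕ :=
  {x : ℕ | 1 ≤ x ∧ x ≤ d ∧
    (1 - ε) * (d : ℝ) ^ M / (Nat.factorial M : ℝ) ≤
      (Nat.choose (M + d) d : ℝ) - (Nat.choose (M + x) x : ℝ)}

private lemma factChoose (M x : ℕ) :
    (Nat.factorial M : ℝ) * (Nat.choose (M + x) x : ℝ) = ((M + x).descFactorial M : ℝ) := by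
  have h : (M + x).descFactorial M = Nat.factorial M * Nat.choose (M + x) x := by
    rw [Nat.descFactorial_eq_factorial_mul_choose, Nat.choose_symm_add]
  exact_mod_cast h.symm

private lemma descF_lower (M x : ℕ) : ((x : ℝ)) ^ M ≤ ((M + x).descFactorial M : ℝ) := by
  have h : x ^ M ≤ (M + x).descFactorial M := by
    calc x ^ M ≤ (x + 1) ^ M := Nat.pow_le_pow_left (Nat.le_succ x) M
    _ = (M + x + 1 - M) ^ M := by congr 1; omega
    _ ≤ _ := Nat.pow_sub_le_descFactorial (M + x) M
  exact_mod_cast h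

private lemma descF_upper (M x : ℕ) : ((M + x).descFactorial M : ℝ) ≤ ((x : ℝ) + M) ^ M := by
  have h : (M + x).descFactorial M ≤ (M + x) ^ M := Nat.descFactorial_le_pow _ _
  have h2 : (((M + x : ℕ)) : ℝ) ^ M = ((x : ℝ) + M) ^ M := by push_cast; ring
  calc ((M + x).descFactorial M : ℝ) ≤ (((M + x : ℕ)) : ℝ) ^ M := by exact_mod_cast h
    _ = _ := h2

private lemma mem_Sset {M : ℕ} {ε : ℝ} {d x : ℕ} (hx1 : 1 ≤ x) (hxd : x ≤ d)
    (h : ((x : ℝ) + M) ^ M ≤ ε * (d : ℝ) ^ M) : x ∈ Sset M ε d := by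
  have hK : (0 : ℝ) < (Nat.factorial M : ℝ) := by exact_mod_cast Nat.factorial_pos M
  refine ⟨hx1, hxd, ?_⟩
  rw [div_le_iff₀ hK]
  have h1 : (d : ℝ) ^ M ≤ (Nat.factorial M : ℝ) * (Nat.choose (M + d) d : ℝ) := by
    rw [factChoose]; exact descF_lower M d
  have h2 : (Nat.factorial M : ℝ) * (Nat.choose (M + x) x : ℝ) ≤ ((x : ℝ) + M) ^ M := by
    rw [factChoose]; exact descF_upper M x
  nlinarith

private lemma Sset_bound {M : ℕ} {ε : ℝ} {d x : ℕ} (hx : x ∈ Sset M ε d) :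
    ((x : ℝ)) ^ M ≤ ((d : ℝ) + M) ^ M - (1 - ε) * (d : ℝ) ^ M := by
  obtain ⟨_, _, h⟩ := hx
  have hK : (0 : ℝ) < (Nat.factorial M : ℝ) := by exact_mod_cast Nat.factorial_pos M
  rw [div_le_iff₀ hK] at h
  have h1 : (Nat.factorial M : ℝ) * (Nat.choose (M + d) d : ℝ) ≤ ((d : ℝ) + M) ^ M := by
    rw [factChoose]; exact descF_upper M d
  have h2 : ((x : ℝ)) ^ M ≤ (Nat.factorial M : ℝ) * (Nat.choose (M + x) x : ℝ) := by
    rw [factChoose]; exact descF_lower M x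
  nlinarith

theorem stmt10 (M : ℕ) (hM : 1 ≤ M) (ε : ℝ) (hε : ε ∈ Set.Ioo (0:ℝ) 1)
    (e : ℕ → ℕ)
    (he : ∀ d : ℕ, (Sset M ε d).Nonempty → IsGreatest (Sset M ε d) (e d))
    (he0 : ∀ d : ℕ, ¬ (Sset M ε d).Nonempty → e d = 0) :
    (∃ D : ℕ, ∀ d : ℕ, D ≤ d → 0 < d → (Sset M ε d).Nonempty) ∧
    Tendsto (fun d : ℕ => (e d : ℝ) / (d : ℝ)) atTop (nhds (ε ^ ((1 : ℝ) / (M : ℝ)))) := by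
  obtain ⟨hε0, hε1⟩ := hε
  have hM0 : (M : ℝ) ≠ 0 := by positivity
  set D : ℕ := ⌈((1 : ℝ) + M) ^ M / ε⌉₊ with hD
  have hne : ∀ d : ℕ, D ≤ d → 0 < d → (Sset M ε d).Nonempty := by
    intro d hd hd0
    refine ⟨1, mem_Sset le_rfl hd0 ?_⟩
    have h1 : ((1 : ℝ) + M) ^ M / ε ≤ (d : ℝ) := le_trans (Nat.le_ceil _) (Nat.cast_le.2 hd)
    have h2 : ((1 : ℝ) + M) ^ M ≤ ε * d := by
      rw [div_le_iff₀ hε0] at h1; linarith [h1]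
    have h3 : (d : ℝ) ≤ (d : ℝ) ^ M := by
      have : (d : ℝ) ^ 1 ≤ (d : ℝ) ^ M :=
        pow_le_pow_right₀ (by exact_mod_cast hd0) hM
      simpa using this
    push_cast
    nlinarith
  refine ⟨⟨D, hne⟩, ?_⟩
  set α : ℝ := ε ^ ((1 : ℝ) / (M : ℝ)) with hα
  have hα0 : 0 < α := Real.rpow_pos_of_pos hε0 _
  have hα1 : α ≤ 1 := Real.rpow_le_one hε0.le hε1.le (by positivity)
  have hαM : α ^ M = ε := by
    rw [hα, ← Real.rpow_natCast (ε ^ ((1 : ℝ) / (M : ℝ))) M, ← Real.rpow_mul hε0.le,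
      one_div_mul_cancel hM0, Real.rpow_one]
  -- lower bound eventually
  have hlow : ∀ᶠ d : ℕ in atTop, α - ((M : ℝ) + 1) / d ≤ (e d : ℝ) / d := by
    filter_upwards [eventually_ge_atTop (max 1 ⌈((M : ℝ) + 1) / α⌉₊)] with d hd
    have hd1 : 1 ≤ d := le_trans (le_max_left _ _) hd
    have hd0 : (0 : ℝ) < d := by exact_mod_cast hd1
    have hdc : ((M : ℝ) + 1) / α ≤ (d : ℝ) :=
      le_trans (Nat.le_ceil _) (by exact_mod_cast le_trans (le_max_right _ _) hd)
    have hαd : (M : ℝ) + 1 ≤ α * d := by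
      rw [div_le_iff₀ hα0] at hdc; linarith
    set x : ℕ := ⌊α * d - M⌋₊ with hx
    have hr0 : (0 : ℝ) ≤ α * d - M := by linarith
    have hx1 : 1 ≤ x := Nat.le_floor (by push_cast; linarith)
    have hxr : (x : ℝ) ≤ α * d - M := Nat.floor_le hr0
    have hxd : x ≤ d := by
      have hαdd : α * d ≤ d := by nlinarith
      have : (x : ℝ) ≤ (d : ℝ) := by
        have hM1 : (0 : ℝ) ≤ (M : ℝ) := by positivity
        linarith
      exact_mod_cast this
    have hmem : x ∈ Sset M ε d := by
      refine mem_Sset hx1 hxd ?_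
      have hxm : (x : ℝ) + M ≤ α * d := by linarith
      calc ((x : ℝ) + M) ^ M ≤ (α * d) ^ M := by
            apply pow_le_pow_left₀ (by positivity) hxm
        _ = α ^ M * (d : ℝ) ^ M := mul_pow _ _ _
        _ = ε * (d : ℝ) ^ M := by rw [hαM]
    have hge : x ≤ e d := (he d ⟨x, hmem⟩).2 hmem
    have hfl : α * d - M - 1 < (x : ℝ) := by
      have := Nat.lt_floor_add_one (α * d - M)
      linarith
    rw [sub_div' (ne_of_gt hd0), div_le_div_iff₀ hd0 hd0]
    have hxe : (x : ℝ) ≤ (e d : ℝ) := by exact_mod_cast hge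
    nlinarith
  -- upper bound eventually
  have hup : ∀ᶠ d : ℕ in atTop,
      (e d : ℝ) / d ≤ ((1 + (M : ℝ) / d) ^ M - (1 - ε)) ^ ((1 : ℝ) / (M : ℝ)) := by
    filter_upwards [eventually_ge_atTop (max 1 D)] with d hd
    have hd1 : 1 ≤ d := le_trans (le_max_left _ _) hd
    have hd0 : (0 : ℝ) < d := by exact_mod_cast hd1
    have hmem : e d ∈ Sset M ε d := (he d (hne d (le_trans (le_max_right _ _) hd) hd1)).1
    have hb := Sset_bound hmem
    have h1 : (1 + (M : ℝ) / d) * d = (d : ℝ) + M := by field_simp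
    have h2 : (1 + (M : ℝ) / d) ^ M * (d : ℝ) ^ M = ((d : ℝ) + M) ^ M := by
      rw [← mul_pow, h1]
    have key : ((e d : ℝ) / d) ^ M ≤ (1 + (M : ℝ) / d) ^ M - (1 - ε) := by
      rw [div_pow, div_le_iff₀ (pow_pos hd0 M)]
      nlinarith
    have h0 : (0 : ℝ) ≤ (e d : ℝ) / d := by positivity
    calc (e d : ℝ) / d = (((e d : ℝ) / d) ^ (M : ℝ)) ^ ((1 : ℝ) / (M : ℝ)) := by
          rw [← Real.rpow_mul h0, mul_one_div, div_self hM0, Real.rpow_one]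
      _ = (((e d : ℝ) / d) ^ M) ^ ((1 : ℝ) / (M : ℝ)) := by rw [Real.rpow_natCast]
      _ ≤ _ := Real.rpow_le_rpow (by positivity) key (by positivity)
  -- limits of the bounding sequences
  have hL : Tendsto (fun d : ℕ => α - ((M : ℝ) + 1) / d) atTop (nhds α) := by
    have := (tendsto_const_nhds (x := α) (f := atTop (α := ℕ))).sub (tendsto_const_div_atTop_nhds_zero_nat ((M : ℝ) + 1))
    simpa using this
  have hU : Tendsto (fun d : ℕ => ((1 + (M : ℝ) / d) ^ M - (1 - ε)) ^ ((1 : ℝ) / (M : ℝ)))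
      atTop (nhds α) := by
    have hbase : Tendsto (fun d : ℕ => (1 + (M : ℝ) / d) ^ M - (1 - ε)) atTop (nhds ε) := by
      have h1 : Tendsto (fun d : ℕ => (M : ℝ) / d) atTop (nhds 0) :=
        tendsto_const_div_atTop_nhds_zero_nat (M : ℝ)
      have h2 := (((tendsto_const_nhds (x := (1:ℝ)) (f := atTop (α := ℕ))).add h1).pow M).sub (tendsto_const_nhds (x := 1 - ε))
      have h3 : ((1 : ℝ) + 0) ^ M - (1 - ε) = ε := by norm_num
      rwa [h3] at h2
    exact hbase.rpow_const (Or.inr (by positivity))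
  exact tendsto_of_tendsto_of_tendsto_of_le_of_le' hL hU hlow hup
end

section
/- Fix an integer M ≥ 2 and a real number ε ∈ (0,1). For each positive integer d, let e(d) be the largest integer e with 1 ≤ e ≤ d and (1 − ε)·d^M / M! ≤ C(M+d, d) − C(M+e, e) (and e(d) = 0 if no such integer exists). Then the real sequence d ↦ (C(M−1+d, d) − C(M−1+e(d), e(d))) · (M−1)! / d^{M−1} converges to 1 − ε^{(M−1)/M} as d → ∞. -/
open Filter Finset

lemma aux_lb (k d : ℕ) : (d:ℝ)^k / (Nat.factorial k) ≤ ((k+d).choose d : ℝ) := by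
  rw [div_le_iff₀ (by positivity)]
  have h1 : (d+1)^k ≤ (k+d).descFactorial k := by
    have h := Nat.pow_sub_le_descFactorial (k+d) k
    have : k + d + 1 - k = d + 1 := by omega
    rwa [this] at h
  have h2 : (k+d).descFactorial k = k.factorial * (k+d).choose d := by
    rw [Nat.descFactorial_eq_factorial_mul_choose, Nat.choose_symm_add]
  have h3 : d^k ≤ k.factorial * (k+d).choose d :=
    le_trans (Nat.pow_le_pow_left (by omega) k) (h2 ▸ h1)
  exact_mod_cast Nat.mul_comm _ _ ▸ h3

lemma aux_ub (k d : ℕ) : ((k+d).choose d : ℝ) ≤ ((d:ℝ)+k)^k / (Nat.factorial k) := by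
  rw [le_div_iff₀ (by positivity)]
  have h1 : (k+d).descFactorial k ≤ (k+d)^k := Nat.descFactorial_le_pow _ _
  have h2 : (k+d).descFactorial k = k.factorial * (k+d).choose d := by
    rw [Nat.descFactorial_eq_factorial_mul_choose, Nat.choose_symm_add]
  have h3 : k.factorial * (k+d).choose d ≤ (k+d)^k := h2 ▸ h1
  calc ((k+d).choose d : ℝ) * k.factorial
      = ((k.factorial * (k+d).choose d : ℕ) : ℝ) := by push_cast; ring
    _ ≤ (((k+d)^k : ℕ) : ℝ) := by exact_mod_cast h3
    _ = ((d:ℝ)+k)^k := by push_cast; ring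

lemma ratio_tendsto (k : ℕ) :
    Tendsto (fun d : ℕ => ((k+d).choose d : ℝ) * (Nat.factorial k) / (d:ℝ)^k)
      atTop (nhds 1) := by
  have hupl : Tendsto (fun d : ℕ => (1+(k:ℝ)/d)^k) atTop (nhds 1) := by
    have h0 : Tendsto (fun d : ℕ => (k:ℝ)/d) atTop (nhds 0) :=
      tendsto_const_div_atTop_nhds_zero_nat (k:ℝ)
    have := (tendsto_const_nhds (x := (1:ℝ)) (f := atTop (α := ℕ))).add h0
    have h2 := this.pow k
    simpa using h2
  refine tendsto_of_tendsto_of_tendsto_of_le_of_le' tendsto_const_nhds hupl ?_ ?_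
  · filter_upwards [eventually_ge_atTop 1] with d hd
    have hd0 : (0:ℝ) < d := by exact_mod_cast hd
    rw [le_div_iff₀ (by positivity), one_mul]
    have := aux_lb k d
    rw [div_le_iff₀ (by positivity)] at this
    linarith
  · filter_upwards [eventually_ge_atTop 1] with d hd
    have hd0 : (0:ℝ) < d := by exact_mod_cast hd
    rw [div_le_iff₀ (by positivity)]
    have := aux_ub k d
    rw [le_div_iff₀ (by positivity)] at this
    calc ((k+d).choose d : ℝ) * k.factorial ≤ ((d:ℝ)+k)^k := this
      _ = (1+(k:ℝ)/d)^k * d^k := by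
          rw [← mul_pow]; congr 1; field_simp

theorem stmt11 (M : ℕ) (hM : 2 ≤ M) (ε : ℝ) (hε : ε ∈ Set.Ioo (0:ℝ) 1)
    (e : ℕ → ℕ)
    (he : ∀ d : ℕ, (Sset M ε d).Nonempty → IsGreatest (Sset M ε d) (e d))
    (he0 : ∀ d : ℕ, ¬ (Sset M ε d).Nonempty → e d = 0) :
    Tendsto (fun d : ℕ =>
        ((Nat.choose (M - 1 + d) d : ℝ) - (Nat.choose (M - 1 + e d) (e d) : ℝ)) *
          (Nat.factorial (M - 1) : ℝ) / (d : ℝ) ^ (M - 1))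
      atTop (nhds (1 - ε ^ (((M : ℝ) - 1) / (M : ℝ)))) := by
  obtain ⟨hε0, hε1⟩ := hε
  have hMpos : 0 < M := by omega
  have hMne : ((M:ℝ)) ≠ 0 := by positivity
  have hfac : (0:ℝ) < Nat.factorial M := by positivity
  set c := ε ^ ((M:ℝ)⁻¹) with hc_def
  have hc0 : 0 < c := Real.rpow_pos_of_pos hε0 _
  have hcM : c ^ M = ε := by
    rw [hc_def, ← Real.rpow_natCast (ε ^ ((M:ℝ)⁻¹)) M, ← Real.rpow_mul hε0.le,
      inv_mul_cancel₀ hMne, Real.rpow_one]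
  have hc1 : c ≤ 1 := Real.rpow_le_one hε0.le hε1.le (by positivity)
  -- eventual nonemptiness
  have hgrow : Tendsto (fun d : ℕ => ε * (d:ℝ)^M / (Nat.factorial M)) atTop atTop := by
    apply Tendsto.atTop_div_const hfac
    apply Tendsto.const_mul_atTop hε0
    exact (tendsto_pow_atTop (by omega)).comp tendsto_natCast_atTop_atTop
  have hne : ∀ᶠ d : ℕ in atTop, (Sset M ε d).Nonempty := by
    filter_upwards [hgrow.eventually_ge_atTop ((M:ℝ)+1), eventually_ge_atTop 1] with d hd hd1
    refine ⟨1, le_refl 1, hd1, ?_⟩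
    have h1 : ((M + 1).choose 1 : ℝ) = (M:ℝ) + 1 := by
      rw [Nat.choose_one_right]; push_cast; ring
    have h2 := aux_lb M d
    have h3 : (1-ε) * (d:ℝ)^M / (Nat.factorial M)
        = (d:ℝ)^M / (Nat.factorial M) - ε * (d:ℝ)^M / (Nat.factorial M) := by ring
    rw [h1, h3]
    linarith
  -- key properties of e d
  have hkey : ∀ᶠ d : ℕ in atTop, (1 ≤ e d ∧ e d ≤ d) ∧
      c * d ≤ (e d : ℝ) + M + 1 ∧
      ((e d : ℝ))^M ≤ ((d:ℝ)+M)^M - (1-ε)*(d:ℝ)^M := by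
    filter_upwards [hne, eventually_ge_atTop 1] with d hd hd1
    obtain ⟨hmem, hub⟩ := he d hd
    obtain ⟨h1e, hed, hineq⟩ := hmem
    have hd0 : (0:ℝ) < d := by exact_mod_cast hd1
    refine ⟨⟨h1e, hed⟩, ?_, ?_⟩
    · rcases eq_or_lt_of_le hed with heq | hlt
      · calc c * d ≤ 1 * d := by
              apply mul_le_mul_of_nonneg_right hc1 hd0.le
          _ = (d:ℝ) := one_mul _
          _ ≤ (e d : ℝ) + M + 1 := by
              have hMr : (0:ℝ) < M := by exact_mod_cast hMpos
              rw [heq]; push_cast; linarith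
      · have hnot : (e d + 1) ∉ Sset M ε d := by
          intro hmem'
          have := hub hmem'
          omega
        have hstr : ((M+d).choose d : ℝ) - ((M+(e d +1)).choose (e d+1) : ℝ)
            < (1-ε) * (d:ℝ)^M / (Nat.factorial M) := by
          by_contra hcon
          push_neg at hcon
          exact hnot ⟨by omega, by omega, hcon⟩
        have hClb := aux_lb M d
        have hCub := aux_ub M (e d + 1)
        have hx : ε * (d:ℝ)^M / (Nat.factorial M) < (((e d : ℝ)+1)+M)^M / (Nat.factorial M) := by
          push_cast at hCub ⊢
          have h3 : (1-ε) * (d:ℝ)^M / (Nat.factorial M)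
              = (d:ℝ)^M / (Nat.factorial M) - ε * (d:ℝ)^M / (Nat.factorial M) := by ring
          rw [h3] at hstr
          have : ε * (d:ℝ)^M / (Nat.factorial M) = ε * ((d:ℝ)^M / (Nat.factorial M)) := by ring
          linarith
        have hx2 : ε * (d:ℝ)^M < (((e d : ℝ)+1)+M)^M :=
          (div_lt_div_iff_of_pos_right hfac).mp hx
        by_contra hcon
        push_neg at hcon
        have h0 : (0:ℝ) ≤ (e d : ℝ) + 1 + M := by positivity
        have hle : (e d : ℝ) + 1 + M ≤ c * d := by linarith
        have := pow_le_pow_left₀ h0 hle M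
        rw [mul_pow, hcM] at this
        linarith
    · have hlb := aux_lb M (e d)
      have hub' := aux_ub M d
      have h4 : ((e d : ℝ))^M / (Nat.factorial M)
          ≤ (((d:ℝ)+M)^M - (1-ε)*(d:ℝ)^M) / (Nat.factorial M) := by
        rw [sub_div]
        linarith
      exact (div_le_div_iff_of_pos_right hfac).mp h4
  -- tendsto of e d / d
  have hlow : ∀ᶠ d : ℕ in atTop, c - ((M:ℝ)+1)/d ≤ (e d : ℝ)/d := by
    filter_upwards [hkey, eventually_ge_atTop 1] with d hd hd1
    obtain ⟨-, h2, -⟩ := hd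
    have hd0 : (0:ℝ) < d := by exact_mod_cast hd1
    rw [le_div_iff₀ hd0, sub_mul, div_mul_cancel₀ _ hd0.ne']
    linarith
  have hup : ∀ᶠ d : ℕ in atTop,
      (e d : ℝ)/d ≤ ((1+(M:ℝ)/d)^M - 1 + ε) ^ ((M:ℝ)⁻¹) := by
    filter_upwards [hkey, eventually_ge_atTop 1] with d hd hd1
    obtain ⟨-, -, h3⟩ := hd
    have hd0 : (0:ℝ) < d := by exact_mod_cast hd1
    have hq : ((e d : ℝ)/d)^M ≤ (1+(M:ℝ)/d)^M - 1 + ε := by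
      rw [div_pow, div_le_iff₀ (by positivity)]
      have heq : ((1+(M:ℝ)/d)^M - 1 + ε) * (d:ℝ)^M
          = ((d:ℝ)+M)^M - (1-ε)*(d:ℝ)^M := by
        have h1 : (1+(M:ℝ)/d) = ((d:ℝ)+M)/d := by field_simp
        rw [h1, div_pow]
        field_simp
        ring
      rw [heq]
      exact h3
    have h0 : (0:ℝ) ≤ (e d : ℝ)/d := by positivity
    calc (e d : ℝ)/d = (((e d : ℝ)/d)^M) ^ ((M:ℝ)⁻¹) := by
          rw [← Real.rpow_natCast ((e d : ℝ)/d) M, ← Real.rpow_mul h0,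
            mul_inv_cancel₀ hMne, Real.rpow_one]
      _ ≤ ((1+(M:ℝ)/d)^M - 1 + ε) ^ ((M:ℝ)⁻¹) :=
          Real.rpow_le_rpow (by positivity) hq (by positivity)
  have haux : Tendsto (fun d : ℕ => (1+(M:ℝ)/d)^M) atTop (nhds 1) := by
    have h0 : Tendsto (fun d : ℕ => (M:ℝ)/d) atTop (nhds 0) :=
      tendsto_const_div_atTop_nhds_zero_nat (M:ℝ)
    have := ((tendsto_const_nhds (x := (1:ℝ)) (f := atTop (α := ℕ))).add h0).pow M
    simpa using this
  have hup_lim : Tendsto (fun d : ℕ => ((1+(M:ℝ)/d)^M - 1 + ε) ^ ((M:ℝ)⁻¹))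
      atTop (nhds c) := by
    have h1 : Tendsto (fun d : ℕ => (1+(M:ℝ)/d)^M - 1 + ε) atTop (nhds ε) := by
      have := (haux.sub_const 1).add_const ε
      simpa using this
    exact h1.rpow_const (p := (M:ℝ)⁻¹) (Or.inl hε0.ne')
  have hlow_lim : Tendsto (fun d : ℕ => c - ((M:ℝ)+1)/d) atTop (nhds c) := by
    have := (tendsto_const_nhds (x := c) (f := atTop (α := ℕ))).sub
      (tendsto_const_div_atTop_nhds_zero_nat ((M:ℝ)+1))
    simpa using this
  have hed : Tendsto (fun d : ℕ => (e d : ℝ)/d) atTop (nhds c) :=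
    tendsto_of_tendsto_of_tendsto_of_le_of_le' hlow_lim hup_lim hlow hup
  -- final assembly
  set K := M - 1 with hK_def
  have hKfac : (0:ℝ) < Nat.factorial K := by positivity
  have hA : Tendsto (fun d : ℕ => ((K+d).choose d : ℝ) * (Nat.factorial K) / (d:ℝ)^K)
      atTop (nhds 1) := ratio_tendsto K
  have hBlow : ∀ᶠ d : ℕ in atTop,
      ((e d : ℝ)/d)^K ≤ ((K + e d).choose (e d) : ℝ) * (Nat.factorial K) / (d:ℝ)^K := by
    filter_upwards [eventually_ge_atTop 1] with d hd1
    have hd0 : (0:ℝ) < d := by exact_mod_cast hd1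
    have h := aux_lb K (e d)
    rw [div_le_iff₀ hKfac] at h
    rw [div_pow, div_le_div_iff_of_pos_right (by positivity)]
    exact h
  have hBup : ∀ᶠ d : ℕ in atTop,
      ((K + e d).choose (e d) : ℝ) * (Nat.factorial K) / (d:ℝ)^K
        ≤ ((e d : ℝ)/d + (K:ℝ)/d)^K := by
    filter_upwards [eventually_ge_atTop 1] with d hd1
    have hd0 : (0:ℝ) < d := by exact_mod_cast hd1
    have h := aux_ub K (e d)
    rw [le_div_iff₀ hKfac] at h
    have heq : ((e d : ℝ)/d + (K:ℝ)/d)^K = ((e d : ℝ) + K)^K / (d:ℝ)^K := by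
      rw [← add_div, div_pow]
    rw [heq, div_le_div_iff_of_pos_right (by positivity)]
    exact h
  have hBlow_lim : Tendsto (fun d : ℕ => ((e d : ℝ)/d)^K) atTop (nhds (c^K)) := hed.pow K
  have hBup_lim : Tendsto (fun d : ℕ => ((e d : ℝ)/d + (K:ℝ)/d)^K) atTop (nhds (c^K)) := by
    have := (hed.add (tendsto_const_div_atTop_nhds_zero_nat (K:ℝ))).pow K
    simpa using this
  have hB : Tendsto (fun d : ℕ => ((K + e d).choose (e d) : ℝ) * (Nat.factorial K) / (d:ℝ)^K)
      atTop (nhds (c^K)) :=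
    tendsto_of_tendsto_of_tendsto_of_le_of_le' hBlow_lim hBup_lim hBlow hBup
  have hfinal := hA.sub hB
  have hcK : c^K = ε ^ (((M:ℝ) - 1) / (M:ℝ)) := by
    rw [hc_def, ← Real.rpow_natCast (ε ^ ((M:ℝ)⁻¹)) K, ← Real.rpow_mul hε0.le]
    congr 1
    have : ((K:ℕ):ℝ) = (M:ℝ) - 1 := by
      rw [hK_def]; push_cast [Nat.cast_sub (by omega : 1 ≤ M)]; ring
    rw [this]; field_simp
  rw [hcK] at hfinal
  refine hfinal.congr fun d => ?_
  rw [← sub_div, ← sub_mul]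
end
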